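/- arXiv:1111.2108 — 6 statements merged into one kernel-verified Lean document; each statement's English description precedes it below -/
import Mathlib

section
/- Let K ≥ 1 and let A₀ = [[a, b], [c, d]], A₁ = [[a₁, r₁·b], [r₁·c, d₁]], …, A_K = [[a_K, r_K·b], [r_K·c, d_K]] be real 2×2 matrices (so all matrices share the same off-diagonal pair (b, c) up to the scalar factors r₁, …, r_K). If b·c > 0, then there exists an invertible real 2×2 matrix Q such that Q·A_k·Q⁻¹ is symmetric for every k with 0 ≤ k ≤ K. -/
open Matrix

/-- simultaneous symmetrization of a finite family of real 2×2
matrices sharing the off-diagonal pair `(b, c)` up to scalar factors `r k`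
(with `r 0 = 1`, so `A 0 = !![a, b; c, d]`), under the condition `b * c > 0`. -/
theorem simultaneous_symmetrization
    (K : ℕ) (hK : 1 ≤ K) (b c : ℝ)
    (aa dd r : Fin (K + 1) → ℝ) (hr0 : r 0 = 1)
    (A : Fin (K + 1) → Matrix (Fin 2) (Fin 2) ℝ)
    (hA : ∀ k, A k = !![aa k, r k * b; r k * c, dd k])
    (hbc : b * c > 0) :
    ∃ Q : Matrix (Fin 2) (Fin 2) ℝ, IsUnit Q ∧ ∀ k, (Q * A k * Q⁻¹).IsSymm := by
  have hb : b ≠ 0 := by rintro rfl; simp at hbc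
  have hcb : c / b > 0 := by
    have : c / b = (b * c) / (b * b) := by field_simp
    rw [this]
    exact div_pos hbc (mul_self_pos.mpr hb)
  set s : ℝ := Real.sqrt (c / b) with hs
  have hspos : 0 < s := Real.sqrt_pos.mpr hcb
  have hsne : s ≠ 0 := ne_of_gt hspos
  have hs2 : s * s = c / b := Real.mul_self_sqrt hcb.le
  have hs2b : s * s * b = c := by field_simp [hb] at hs2 ⊢; linarith
  refine ⟨!![s, 0; 0, 1], ?_, ?_⟩
  · rw [Matrix.isUnit_iff_isUnit_det]
    simp [Matrix.det_fin_two_of, hsne]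
  · have hinv : (!![s, 0; 0, 1] : Matrix (Fin 2) (Fin 2) ℝ)⁻¹ = !![s⁻¹, 0; 0, 1] := by
      apply Matrix.inv_eq_right_inv
      rw [Matrix.mul_fin_two]
      field_simp
      rw [Matrix.one_fin_two]; simp
    intro k
    rw [hA k, hinv]
    rw [Matrix.mul_fin_two, Matrix.mul_fin_two]
    unfold Matrix.IsSymm
    have hk : r k * (s * s * b) = r k * c := by rw [hs2b]
    ext i j
    fin_cases i <;> fin_cases j <;>
      simp [Matrix.transpose_apply] <;>
      field_simp <;> nlinarith [hk]
end

section
/- Let K ≥ 1 and let A₀ = [[a, b], [c, d]], A₁ = [[a₁, r₁·b], [r₁·c, d₁]], …, A_K = [[a_K, r_K·b], [r_K·c, d_K]] be real 2×2 matrices. If b·c ≥ 0, then the generalized spectral radius of 𝒜 = {A₀, …, A_K} equals max{ρ(A₀), ρ(A₁), …, ρ(A_K)}; that is, sup_{n≥1} max_{M ∈ 𝒜ⁿ} ρ(M)^{1/n} = max_{0≤k≤K} ρ(A_k). -/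
open Matrix

/-- The spectral radius of a real 2×2 matrix: the maximum modulus of its
complex eigenvalues. -/
noncomputable def specRad (M : Matrix (Fin 2) (Fin 2) ℝ) : ℝ :=
  (spectralRadius ℂ (M.map Complex.ofReal)).toReal

/-- `prodsOfLen 𝒜 n` is the set `𝒜ⁿ` of all products of `n` matrices taken
from `𝒜`. -/
def prodsOfLen (𝒜 : Set (Matrix (Fin 2) (Fin 2) ℝ)) (n : ℕ) :
    Set (Matrix (Fin 2) (Fin 2) ℝ) :=
  {M | ∃ l : List (Matrix (Fin 2) (Fin 2) ℝ),
    l.length = n ∧ (∀ X ∈ l, X ∈ 𝒜) ∧ M = l.prod}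

/-- The generalized spectral radius of `𝒜`:
`sup_{n ≥ 1} max_{M ∈ 𝒜ⁿ} ρ(M)^(1/n)`. -/
noncomputable def gsr (𝒜 : Set (Matrix (Fin 2) (Fin 2) ℝ)) : ℝ :=
  sSup {x : ℝ | ∃ n : ℕ, 1 ≤ n ∧ ∃ M ∈ prodsOfLen 𝒜 n,
    x = specRad M ^ ((1 : ℝ) / n)}

/-- `𝒜` has the spectral finiteness property if its generalized spectral
radius is realized as `ρ(M)^(1/n)` for some `n ≥ 1` and some `M ∈ 𝒜ⁿ`. -/
def hasSpectralFiniteness (𝒜 : Set (Matrix (Fin 2) (Fin 2) ℝ)) : Prop :=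
  ∃ n : ℕ, 1 ≤ n ∧ ∃ M ∈ prodsOfLen 𝒜 n, gsr 𝒜 = specRad M ^ ((1 : ℝ) / n)


open scoped Matrix.Norms.L2Operator

lemma specRad_nonneg (M : Matrix (Fin 2) (Fin 2) ℝ) : 0 ≤ specRad M :=
  ENNReal.toReal_nonneg

noncomputable instance : CStarAlgebra (Matrix (Fin 2) (Fin 2) ℂ) := { }

lemma sr_le_norm (a : Matrix (Fin 2) (Fin 2) ℂ) : (spectralRadius ℂ a).toReal ≤ ‖a‖ := by
  have h := spectrum.spectralRadius_le_nnnorm (𝕜 := ℂ) a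
  calc (spectralRadius ℂ a).toReal ≤ ((‖a‖₊ : ENNReal)).toReal :=
        ENNReal.toReal_mono ENNReal.coe_ne_top h
    _ = ‖a‖ := by simp

lemma sa_norm (a : Matrix (Fin 2) (Fin 2) ℂ) (ha : IsSelfAdjoint a) :
    (spectralRadius ℂ a).toReal = ‖a‖ := by
  rw [IsSelfAdjoint.spectralRadius_eq_nnnorm ha]; simp

lemma tri_spectrum (x y w : ℂ) : spectrum ℂ (!![x, w; (0:ℂ), y]) = {x, y} := by
  ext z
  rw [spectrum.mem_iff, Matrix.isUnit_iff_isUnit_det, isUnit_iff_ne_zero, not_not]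
  have h1 : (algebraMap ℂ (Matrix (Fin 2) (Fin 2) ℂ) z - !![x, w; 0, y]) =
      !![z - x, -w; 0, z - y] := by
    ext i j
    fin_cases i <;> fin_cases j <;>
      simp [Matrix.algebraMap_matrix_apply]
  rw [h1, Matrix.det_fin_two_of]
  simp only [Set.mem_insert_iff, Set.mem_singleton_iff]
  constructor
  · intro h
    have h2 : (z - x) * (z - y) = 0 := by linear_combination h
    rcases mul_eq_zero.mp h2 with h | h
    · exact Or.inl (sub_eq_zero.mp h)
    · exact Or.inr (sub_eq_zero.mp h)
  · rintro (rfl | rfl) <;> ring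

lemma specRad_tri (x y w : ℝ) : specRad !![x, w; (0:ℝ), y] = max |x| |y| := by
  have hmap : (!![x, w; (0:ℝ), y]).map Complex.ofReal =
      !![(x:ℂ), (w:ℂ); (0:ℂ), (y:ℂ)] := by
    ext i j
    fin_cases i <;> fin_cases j <;> simp
  rw [specRad, hmap, spectralRadius, tri_spectrum]
  rw [show ({(x:ℂ), (y:ℂ)} : Set ℂ) = insert (x:ℂ) {(y:ℂ)} from rfl]
  rw [iSup_insert, iSup_singleton]
  have : ((‖(x:ℂ)‖₊ : ENNReal) ⊔ (‖(y:ℂ)‖₊ : ENNReal)).toReal = max ‖(x:ℂ)‖ ‖(y:ℂ)‖ := by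
    rw [← ENNReal.coe_max, ENNReal.coe_toReal, NNReal.coe_max]
    simp [coe_nnnorm]
  rw [this]
  simp [Complex.norm_real]

lemma tri_spectrum' (x y w : ℂ) : spectrum ℂ (!![x, (0:ℂ); w, y]) = {x, y} := by
  ext z
  rw [spectrum.mem_iff, Matrix.isUnit_iff_isUnit_det, isUnit_iff_ne_zero, not_not]
  have h1 : (algebraMap ℂ (Matrix (Fin 2) (Fin 2) ℂ) z - !![x, 0; w, y]) =
      !![z - x, 0; -w, z - y] := by
    ext i j
    fin_cases i <;> fin_cases j <;>
      simp [Matrix.algebraMap_matrix_apply]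
  rw [h1, Matrix.det_fin_two_of]
  simp only [Set.mem_insert_iff, Set.mem_singleton_iff]
  constructor
  · intro h
    have h2 : (z - x) * (z - y) = 0 := by linear_combination h
    rcases mul_eq_zero.mp h2 with h | h
    · exact Or.inl (sub_eq_zero.mp h)
    · exact Or.inr (sub_eq_zero.mp h)
  · rintro (rfl | rfl) <;> ring

lemma specRad_tri' (x y w : ℝ) : specRad !![x, (0:ℝ); w, y] = max |x| |y| := by
  have hmap : (!![x, (0:ℝ); w, y]).map Complex.ofReal =
      !![(x:ℂ), (0:ℂ); (w:ℂ), (y:ℂ)] := by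
    ext i j
    fin_cases i <;> fin_cases j <;> simp
  rw [specRad, hmap, spectralRadius, tri_spectrum']
  rw [show ({(x:ℂ), (y:ℂ)} : Set ℂ) = insert (x:ℂ) {(y:ℂ)} from rfl]
  rw [iSup_insert, iSup_singleton]
  have : ((‖(x:ℂ)‖₊ : ENNReal) ⊔ (‖(y:ℂ)‖₊ : ENNReal)).toReal = max ‖(x:ℂ)‖ ‖(y:ℂ)‖ := by
    rw [← ENNReal.coe_max, ENNReal.coe_toReal, NNReal.coe_max]
    simp [coe_nnnorm]
  rw [this]
  simp [Complex.norm_real]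

lemma specRad_lowzero (M : Matrix (Fin 2) (Fin 2) ℝ) (h : M 1 0 = 0) :
    specRad M = max |M 0 0| |M 1 1| := by
  have : M = !![M 0 0, M 0 1; (0:ℝ), M 1 1] := by
    conv_lhs => rw [Matrix.eta_fin_two M]
    rw [h]
  rw [this]
  exact specRad_tri _ _ _

lemma specRad_upzero (M : Matrix (Fin 2) (Fin 2) ℝ) (h : M 0 1 = 0) :
    specRad M = max |M 0 0| |M 1 1| := by
  have : M = !![M 0 0, (0:ℝ); M 1 0, M 1 1] := by
    conv_lhs => rw [Matrix.eta_fin_two M]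
    rw [h]
  rw [this]
  exact specRad_tri' _ _ _

lemma tri_prod_bound (R : ℝ) (hR : 0 ≤ R) (S : Set (Matrix (Fin 2) (Fin 2) ℝ))
    (hS : ∀ X ∈ S, X 1 0 = 0 ∧ |X 0 0| ≤ R ∧ |X 1 1| ≤ R) :
    ∀ l : List (Matrix (Fin 2) (Fin 2) ℝ), (∀ X ∈ l, X ∈ S) →
      l.prod 1 0 = 0 ∧ |l.prod 0 0| ≤ R ^ l.length ∧ |l.prod 1 1| ≤ R ^ l.length := by
  intro l
  induction l with
  | nil =>
    intro _
    refine ⟨?_, ?_, ?_⟩ <;> simp [Matrix.one_apply]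
  | cons X l ih =>
    intro hmem
    obtain ⟨hX0, hXa, hXd⟩ := hS X (hmem X (List.mem_cons_self))
    obtain ⟨hQ0, hQa, hQd⟩ := ih (fun Y hY => hmem Y (List.mem_cons_of_mem X hY))
    set Q := l.prod
    have hmul : ∀ i j, (X * Q) i j = X i 0 * Q 0 j + X i 1 * Q 1 j := by
      intro i j
      rw [Matrix.mul_apply, Fin.sum_univ_two]
    refine ⟨?_, ?_, ?_⟩
    · rw [List.prod_cons]; rw [hmul]; rw [hX0, hQ0]; ring
    · rw [List.prod_cons, hmul, hQ0]
      calc |X 0 0 * Q 0 0 + X 0 1 * 0| = |X 0 0| * |Q 0 0| := by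
            rw [mul_zero, add_zero, abs_mul]
        _ ≤ R * R ^ l.length := by
            exact mul_le_mul hXa hQa (abs_nonneg _) hR
        _ = R ^ (X :: l).length := by rw [List.length_cons, pow_succ]; ring
    · rw [List.prod_cons, hmul, hX0]
      calc |0 * Q 0 1 + X 1 1 * Q 1 1| = |X 1 1| * |Q 1 1| := by
            rw [zero_mul, zero_add, abs_mul]
        _ ≤ R * R ^ l.length := mul_le_mul hXd hQd (abs_nonneg _) hR
        _ = R ^ (X :: l).length := by rw [List.length_cons, pow_succ]; ring

lemma tri_prod_bound' (R : ℝ) (hR : 0 ≤ R) (S : Set (Matrix (Fin 2) (Fin 2) ℝ))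
    (hS : ∀ X ∈ S, X 0 1 = 0 ∧ |X 0 0| ≤ R ∧ |X 1 1| ≤ R) :
    ∀ l : List (Matrix (Fin 2) (Fin 2) ℝ), (∀ X ∈ l, X ∈ S) →
      l.prod 0 1 = 0 ∧ |l.prod 0 0| ≤ R ^ l.length ∧ |l.prod 1 1| ≤ R ^ l.length := by
  intro l
  induction l with
  | nil =>
    intro _
    refine ⟨?_, ?_, ?_⟩ <;> simp [Matrix.one_apply]
  | cons X l ih =>
    intro hmem
    obtain ⟨hX0, hXa, hXd⟩ := hS X (hmem X (List.mem_cons_self))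
    obtain ⟨hQ0, hQa, hQd⟩ := ih (fun Y hY => hmem Y (List.mem_cons_of_mem X hY))
    set Q := l.prod
    have hmul : ∀ i j, (X * Q) i j = X i 0 * Q 0 j + X i 1 * Q 1 j := by
      intro i j
      rw [Matrix.mul_apply, Fin.sum_univ_two]
    refine ⟨?_, ?_, ?_⟩
    · rw [List.prod_cons]; rw [hmul]; rw [hX0, hQ0]; ring
    · rw [List.prod_cons, hmul, hX0]
      calc |X 0 0 * Q 0 0 + 0 * Q 1 0| = |X 0 0| * |Q 0 0| := by
            rw [zero_mul, add_zero, abs_mul]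
        _ ≤ R * R ^ l.length := mul_le_mul hXa hQa (abs_nonneg _) hR
        _ = R ^ (X :: l).length := by rw [List.length_cons, pow_succ]; ring
    · rw [List.prod_cons, hmul, hQ0]
      calc |X 1 0 * 0 + X 1 1 * Q 1 1| = |X 1 1| * |Q 1 1| := by
            rw [mul_zero, zero_add, abs_mul]
        _ ≤ R * R ^ l.length := mul_le_mul hXd hQd (abs_nonneg _) hR
        _ = R ^ (X :: l).length := by rw [List.length_cons, pow_succ]; ring

lemma conj_list_prod {α : Type*} [Monoid α] (u v : α) (huv : u * v = 1) (hvu : v * u = 1)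
    (l : List α) : v * l.prod * u = (l.map (fun X => v * X * u)).prod := by
  induction l with
  | nil => simpa using hvu
  | cons X l ih =>
    rw [List.prod_cons, List.map_cons, List.prod_cons, ← ih]
    simp only [mul_assoc]
    rw [← mul_assoc u v, huv, one_mul]

lemma sym_selfadjoint (x y z : ℝ) : _root_.IsSelfAdjoint (!![(x:ℂ), (y:ℂ); (y:ℂ), (z:ℂ)]) := by
  show star _ = _
  ext i j
  fin_cases i <;> fin_cases j <;>
    simp [Matrix.star_apply, Complex.conj_ofReal]

lemma spectralRadius_conj (X : Matrix (Fin 2) (Fin 2) ℂ) (U : (Matrix (Fin 2) (Fin 2) ℂ)ˣ) :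
    spectralRadius ℂ ((↑(U⁻¹) : Matrix (Fin 2) (Fin 2) ℂ) * X * (↑U : Matrix (Fin 2) (Fin 2) ℂ))
      = spectralRadius ℂ X := by
  unfold spectralRadius
  rw [spectrum.units_conjugate']

lemma map_list_prod_ofReal (l : List (Matrix (Fin 2) (Fin 2) ℝ)) :
    (l.prod).map Complex.ofReal = (l.map (fun X => X.map Complex.ofReal)).prod := by
  have := map_list_prod (Complex.ofRealHom.mapMatrix :
    Matrix (Fin 2) (Fin 2) ℝ →+* Matrix (Fin 2) (Fin 2) ℂ) l
  exact this

lemma list_prod_le_pow (l : List ℝ) (R : ℝ) (hR : 0 ≤ R)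
    (h : ∀ x ∈ l, 0 ≤ x ∧ x ≤ R) : l.prod ≤ R ^ l.length := by
  induction l with
  | nil => simp
  | cons x l ih =>
    rw [List.prod_cons, List.length_cons, pow_succ]
    obtain ⟨hx0, hxR⟩ := h x (List.mem_cons_self)
    have hl := ih (fun y hy => h y (List.mem_cons_of_mem x hy))
    have hlprod0 : 0 ≤ l.prod := List.prod_nonneg (fun y hy => (h y (List.mem_cons_of_mem x hy)).1)
    calc x * l.prod ≤ R * R ^ l.length := mul_le_mul hxR hl hlprod0 hR
      _ = R ^ l.length * R := by ring

lemma key_bound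
    (K : ℕ) (b c : ℝ) (aa dd r : Fin (K + 1) → ℝ)
    (A : Fin (K + 1) → Matrix (Fin 2) (Fin 2) ℝ)
    (hA : ∀ k, A k = !![aa k, r k * b; r k * c, dd k])
    (hbc : b * c ≥ 0)
    (R : ℝ) (hR0 : 0 ≤ R) (hRk : ∀ k, specRad (A k) ≤ R) :
    ∀ l : List (Matrix (Fin 2) (Fin 2) ℝ), (∀ X ∈ l, X ∈ Set.range A) →
      specRad l.prod ≤ R ^ l.length := by
  intro l hl
  rcases eq_or_lt_of_le (hbc : (0:ℝ) ≤ b * c) with h0 | hpos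
  · -- b * c = 0
    rcases mul_eq_zero.mp h0.symm with hb | hc
    · -- b = 0 : upper-right entries vanish
      have hS : ∀ X ∈ Set.range A, X 0 1 = 0 ∧ |X 0 0| ≤ R ∧ |X 1 1| ≤ R := by
        rintro X ⟨k, rfl⟩
        have h01 : A k 0 1 = 0 := by rw [hA k]; simp [hb]
        have h00 : A k 0 0 = aa k := by rw [hA k]; simp
        have h11 : A k 1 1 = dd k := by rw [hA k]; simp
        have hsr := specRad_upzero (A k) h01
        rw [h00, h11] at hsr
        refine ⟨h01, ?_, ?_⟩
        · rw [h00]; exact le_trans (le_max_left _ _) (hsr ▸ hRk k)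
        · rw [h11]; exact le_trans (le_max_right _ _) (hsr ▸ hRk k)
      obtain ⟨h0', ha, hd⟩ := tri_prod_bound' R hR0 _ hS l hl
      rw [specRad_upzero _ h0']
      exact max_le ha hd
    · -- c = 0 : lower-left entries vanish
      have hS : ∀ X ∈ Set.range A, X 1 0 = 0 ∧ |X 0 0| ≤ R ∧ |X 1 1| ≤ R := by
        rintro X ⟨k, rfl⟩
        have h10 : A k 1 0 = 0 := by rw [hA k]; simp [hc]
        have h00 : A k 0 0 = aa k := by rw [hA k]; simp
        have h11 : A k 1 1 = dd k := by rw [hA k]; simp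
        have hsr := specRad_lowzero (A k) h10
        rw [h00, h11] at hsr
        refine ⟨h10, ?_, ?_⟩
        · rw [h00]; exact le_trans (le_max_left _ _) (hsr ▸ hRk k)
        · rw [h11]; exact le_trans (le_max_right _ _) (hsr ▸ hRk k)
      obtain ⟨h0', ha, hd⟩ := tri_prod_bound R hR0 _ hS l hl
      rw [specRad_lowzero _ h0']
      exact max_le ha hd
  · -- 0 < b * c
    have hb : b ≠ 0 := by rintro rfl; simp at hpos
    have hc : c ≠ 0 := by rintro rfl; simp at hpos
    have hdiv : 0 < c / b := by
      have h1 : c / b = (b * c) / (b * b) := by field_simp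
      rw [h1]
      exact div_pos hpos (mul_self_pos.mpr hb)
    set t := Real.sqrt (c / b) with htdef
    have ht : 0 < t := Real.sqrt_pos.mpr hdiv
    have ht2 : t ^ 2 = c / b := Real.sq_sqrt hdiv.le
    have hbt : b * t ^ 2 = c := by rw [ht2]; field_simp
    have hbtC : (b : ℂ) * (t : ℂ) ^ 2 = (c : ℂ) := by exact_mod_cast hbt
    have htne : (t : ℂ) ≠ 0 := by exact_mod_cast ht.ne'
    set u : Matrix (Fin 2) (Fin 2) ℂ := !![1, 0; 0, (t : ℂ)] with hu
    set v : Matrix (Fin 2) (Fin 2) ℂ := !![1, 0; 0, (t : ℂ)⁻¹] with hv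
    have huv : u * v = 1 := by
      rw [hu, hv, Matrix.mul_fin_two, Matrix.one_fin_two]
      norm_num [mul_inv_cancel₀ htne]
    have hvu : v * u = 1 := by
      rw [hu, hv, Matrix.mul_fin_two, Matrix.one_fin_two]
      norm_num [inv_mul_cancel₀ htne]
    set U : (Matrix (Fin 2) (Fin 2) ℂ)ˣ := ⟨u, v, huv, hvu⟩ with hU
    have hconj : ∀ k, v * ((A k).map Complex.ofReal) * u =
        !![((aa k : ℝ) : ℂ), ((r k * b * t : ℝ) : ℂ);
           ((r k * b * t : ℝ) : ℂ), ((dd k : ℝ) : ℂ)] := by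
      intro k
      rw [hA k]
      have hmap : (!![aa k, r k * b; r k * c, dd k]).map Complex.ofReal =
          !![((aa k : ℝ) : ℂ), ((r k * b : ℝ) : ℂ); ((r k * c : ℝ) : ℂ), ((dd k : ℝ) : ℂ)] := by
        ext i j; fin_cases i <;> fin_cases j <;> simp
      rw [hmap, hv, hu, Matrix.mul_fin_two, Matrix.mul_fin_two]
      ext i j
      fin_cases i <;> fin_cases j <;> push_cast <;> simp <;> field_simp
      linear_combination (-(r k : ℂ)) * hbtC
    have hUinv : ((U⁻¹ : (Matrix (Fin 2) (Fin 2) ℂ)ˣ) : Matrix (Fin 2) (Fin 2) ℂ) = v := rfl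
    have hUval : ((U : (Matrix (Fin 2) (Fin 2) ℂ)ˣ) : Matrix (Fin 2) (Fin 2) ℂ) = u := rfl
    have hsrconj : ∀ X : Matrix (Fin 2) (Fin 2) ℂ,
        spectralRadius ℂ (v * X * u) = spectralRadius ℂ X := by
      intro X
      rw [← hUinv, ← hUval]
      exact spectralRadius_conj X U
    have hnormk : ∀ k, ‖v * ((A k).map Complex.ofReal) * u‖ = specRad (A k) := by
      intro k
      have h1 : specRad (A k) =
          (spectralRadius ℂ (v * ((A k).map Complex.ofReal) * u)).toReal := by
        rw [specRad, hsrconj]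
      rw [h1, hconj k]
      exact (sa_norm _ (sym_selfadjoint (aa k) (r k * b * t) (dd k))).symm
    have hsr : specRad l.prod =
        (spectralRadius ℂ (v * (l.prod.map Complex.ofReal) * u)).toReal := by
      rw [specRad, hsrconj]
    rw [hsr]
    have hlen : ((((l.map (fun X => X.map Complex.ofReal)).map (fun X => v * X * u)).map
        norm)).length = l.length := by simp
    calc (spectralRadius ℂ (v * (l.prod.map Complex.ofReal) * u)).toReal
        ≤ ‖v * (l.prod.map Complex.ofReal) * u‖ := sr_le_norm _
      _ = ‖((l.map (fun X => X.map Complex.ofReal)).map (fun X => v * X * u)).prod‖ := by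
          rw [map_list_prod_ofReal l, conj_list_prod u v huv hvu]
      _ ≤ (((l.map (fun X => X.map Complex.ofReal)).map (fun X => v * X * u)).map norm).prod :=
          List.norm_prod_le _
      _ ≤ R ^ l.length := by
          rw [← hlen]
          apply list_prod_le_pow _ _ hR0
          intro x hx
          simp only [List.mem_map] at hx
          obtain ⟨Z, ⟨Y, ⟨X, hXl, rfl⟩, rfl⟩, rfl⟩ := hx
          obtain ⟨k, rfl⟩ := hl X hXl
          rw [hnormk k]
          exact ⟨specRad_nonneg _, hRk k⟩

/-- if all matrices share the off-diagonal pair `(b, c)` up to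
scalar factors `r k` (with `r 0 = 1`) and `b * c ≥ 0`, then the generalized
spectral radius of the family equals the maximum of the spectral radii of the
constituent matrices. -/
theorem gsr_eq_max_of_shared_offdiagonal
    (K : ℕ) (hK : 1 ≤ K) (b c : ℝ)
    (aa dd r : Fin (K + 1) → ℝ) (hr0 : r 0 = 1)
    (A : Fin (K + 1) → Matrix (Fin 2) (Fin 2) ℝ)
    (hA : ∀ k, A k = !![aa k, r k * b; r k * c, dd k])
    (hbc : b * c ≥ 0) :
    gsr (Set.range A) = ⨆ k, specRad (A k) := by
  classical
  unfold gsr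
  set R := ⨆ k, specRad (A k) with hRdef
  have hbdd : BddAbove (Set.range fun k => specRad (A k)) :=
    Set.Finite.bddAbove (Set.finite_range _)
  have hRk : ∀ k, specRad (A k) ≤ R := fun k => le_ciSup hbdd k
  have hR0 : 0 ≤ R := le_trans (specRad_nonneg (A 0)) (hRk 0)
  have key := key_bound K b c aa dd r A hA hbc R hR0 hRk
  have hub : ∀ x ∈ {x : ℝ | ∃ n : ℕ, 1 ≤ n ∧ ∃ M ∈ prodsOfLen (Set.range A) n,
      x = specRad M ^ ((1 : ℝ) / n)}, x ≤ R := by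
    rintro x ⟨n, hn, M, ⟨l, hlen, hmem, rfl⟩, rfl⟩
    have h1 : specRad l.prod ≤ R ^ n := hlen ▸ key l hmem
    have hn0 : (n : ℝ) ≠ 0 := Nat.cast_ne_zero.mpr (by omega)
    calc specRad l.prod ^ ((1 : ℝ) / n) ≤ (R ^ n) ^ ((1 : ℝ) / n) :=
          Real.rpow_le_rpow (specRad_nonneg _) h1 (by positivity)
      _ = R := by
          rw [← Real.rpow_natCast R n, ← Real.rpow_mul hR0]
          rw [mul_one_div, div_self hn0, Real.rpow_one]
  have hmemk : ∀ k, specRad (A k) ∈ {x : ℝ | ∃ n : ℕ, 1 ≤ n ∧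
      ∃ M ∈ prodsOfLen (Set.range A) n, x = specRad M ^ ((1 : ℝ) / n)} := by
    intro k
    refine ⟨1, le_refl 1, A k, ⟨[A k], rfl, ?_, by simp⟩, ?_⟩
    · intro X hX
      rw [List.mem_singleton] at hX
      exact hX ▸ Set.mem_range_self k
    · norm_num
  have hbddT : BddAbove {x : ℝ | ∃ n : ℕ, 1 ≤ n ∧
      ∃ M ∈ prodsOfLen (Set.range A) n, x = specRad M ^ ((1 : ℝ) / n)} := ⟨R, hub⟩
  apply le_antisymm
  · exact Real.sSup_le hub hR0
  · exact ciSup_le fun k => le_csSup hbddT (hmemk k)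
end

section
/- Let A = [[λ₁, 0], [0, λ₂]] be a real diagonal 2×2 matrix and B = [[a, b], [c, d]] a real 2×2 matrix. If b·c ≥ 0, then the generalized spectral radius of {A, B} equals max{ρ(A), ρ(B)}; in particular {A, B} has the spectral finiteness property. -/
open Matrix
open scoped Matrix.Norms.L2Operator

noncomputable instance inst_s3 : CStarAlgebra (Matrix (Fin 2) (Fin 2) ℂ) := {}




/-- membership in the spectrum of a 2×2 complex matrix via the characteristic equation. -/
lemma spec2_iff (M : Matrix (Fin 2) (Fin 2) ℂ) (z : ℂ) :
    z ∈ spectrum ℂ M ↔ (z - M 0 0) * (z - M 1 1) - M 0 1 * M 1 0 = 0 := by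
  rw [spectrum.mem_iff, Matrix.isUnit_iff_isUnit_det, isUnit_iff_ne_zero, not_not]
  have hdet : (algebraMap ℂ (Matrix (Fin 2) (Fin 2) ℂ) z - M).det
      = (z - M 0 0) * (z - M 1 1) - M 0 1 * M 1 0 := by
    rw [Matrix.det_fin_two]
    simp [Matrix.algebraMap_matrix_apply]
  rw [hdet]

lemma spectrum_offdiag_zero {M : Matrix (Fin 2) (Fin 2) ℂ} (h : M 0 1 * M 1 0 = 0) :
    spectrum ℂ M = {M 0 0, M 1 1} := by
  ext z
  rw [spec2_iff, h, sub_zero, mul_eq_zero, sub_eq_zero, sub_eq_zero]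
  simp [Set.mem_insert_iff]

lemma srad_pair {M : Matrix (Fin 2) (Fin 2) ℂ} {x y : ℝ}
    (h : spectrum ℂ M = {(x : ℂ), (y : ℂ)}) :
    (spectralRadius ℂ M).toReal = max |x| |y| := by
  rw [spectralRadius, h, iSup_pair]
  have : ((‖(x:ℂ)‖₊ : ENNReal) ⊔ (‖(y:ℂ)‖₊ : ENNReal)) = ((‖(x:ℂ)‖₊ ⊔ ‖(y:ℂ)‖₊ : NNReal) : ENNReal) := by
    simp [ENNReal.coe_max]
  rw [this, ENNReal.coe_toReal]
  simp [NNReal.coe_max, Real.norm_eq_abs]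

lemma selfadj_real_sym (p q r : ℝ) : _root_.IsSelfAdjoint (!![(p:ℂ), (q:ℂ); (q:ℂ), (r:ℂ)]) := by
  rw [_root_.IsSelfAdjoint]
  ext i j
  fin_cases i <;> fin_cases j <;>
    simp [Matrix.star_apply, Matrix.conjTranspose_apply]

lemma norm_eq_srad_of_selfAdjoint {M : Matrix (Fin 2) (Fin 2) ℂ} (h : _root_.IsSelfAdjoint M) :
    ‖M‖ = (spectralRadius ℂ M).toReal := by
  rw [h.spectralRadius_eq_nnnorm, ENNReal.coe_toReal, coe_nnnorm]

lemma norm_diagC (s t : ℝ) : ‖(!![(s:ℂ), 0; 0, (t:ℂ)])‖ = max |s| |t| := by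
  have h : _root_.IsSelfAdjoint (!![(s:ℂ), 0; 0, (t:ℂ)]) := by
    have := selfadj_real_sym s 0 t; simpa using this
  rw [norm_eq_srad_of_selfAdjoint h]
  apply srad_pair
  have := spectrum_offdiag_zero (M := !![(s:ℂ), 0; 0, (t:ℂ)]) (by simp)
  simpa using this

lemma norm_E01 (x : ℝ) : ‖(!![0, (x:ℂ); 0, 0])‖ = |x| := by
  have hsq : ‖(!![0, (x:ℂ); 0, 0])‖ * ‖(!![0, (x:ℂ); 0, 0])‖ = |x| * |x| := by
    rw [← CStarRing.norm_star_mul_self]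
    have hstar : (star (!![0, (x:ℂ); 0, 0]) : Matrix (Fin 2) (Fin 2) ℂ) * !![0, (x:ℂ); 0, 0]
        = !![0, 0; 0, ((x*x : ℝ) : ℂ)] := by
      ext i j
      fin_cases i <;> fin_cases j <;>
        simp [Matrix.star_apply, Matrix.conjTranspose_apply, Matrix.mul_apply,
          Fin.sum_univ_two, Complex.ofReal_mul]
    rw [hstar, show ((x*x:ℝ):ℂ) = (x:ℂ)*(x:ℂ) from by push_cast; ring]
    have := norm_diagC 0 (x*x)
    simp at this
    rw [this]
    rw [abs_mul_abs_self]
    simp [mul_self_nonneg x]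
  nlinarith [norm_nonneg (!![0, (x:ℂ); 0, 0]), abs_nonneg x]

lemma norm_E10 (x : ℝ) : ‖(!![0, 0; (x:ℂ), 0])‖ = |x| := by
  have hsq : ‖(!![0, 0; (x:ℂ), 0])‖ * ‖(!![0, 0; (x:ℂ), 0])‖ = |x| * |x| := by
    rw [← CStarRing.norm_star_mul_self]
    have hstar : (star (!![0, 0; (x:ℂ), 0]) : Matrix (Fin 2) (Fin 2) ℂ) * !![0, 0; (x:ℂ), 0]
        = !![((x*x : ℝ) : ℂ), 0; 0, 0] := by
      ext i j
      fin_cases i <;> fin_cases j <;>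
        simp [Matrix.star_apply, Matrix.conjTranspose_apply, Matrix.mul_apply,
          Fin.sum_univ_two, Complex.ofReal_mul]
    rw [hstar, show ((x*x:ℝ):ℂ) = (x:ℂ)*(x:ℂ) from by push_cast; ring]
    have := norm_diagC (x*x) 0
    simp at this
    rw [this]
    rw [abs_mul_abs_self]
    simp [mul_self_nonneg x]
  nlinarith [norm_nonneg (!![0, 0; (x:ℂ), 0]), abs_nonneg x]

section part2
variable {R : Type*}

lemma spectrum_conj (e einv M : Matrix (Fin 2) (Fin 2) ℂ)
    (h1 : e * einv = 1) (h2 : einv * e = 1) :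
    spectrum ℂ (e * M * einv) = spectrum ℂ M := by
  have u : (Matrix (Fin 2) (Fin 2) ℂ)ˣ := ⟨e, einv, h1, h2⟩
  ext z
  rw [spectrum.mem_iff, spectrum.mem_iff, not_iff_not]
  have key : algebraMap ℂ (Matrix (Fin 2) (Fin 2) ℂ) z - e * M * einv
      = e * ((algebraMap ℂ (Matrix (Fin 2) (Fin 2) ℂ) z - M) * einv) := by
    rw [sub_mul, mul_sub, ← mul_assoc]
    congr 1
    rw [Algebra.algebraMap_eq_smul_one, mul_smul_comm, smul_mul_assoc, mul_one, h1]
    rw [mul_assoc]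
  rw [key]
  let u : (Matrix (Fin 2) (Fin 2) ℂ)ˣ := ⟨e, einv, h1, h2⟩
  rw [show e = (u : Matrix (Fin 2) (Fin 2) ℂ) from rfl,
    Units.isUnit_units_mul]
  rw [show einv = ((u⁻¹ : _ˣ) : Matrix (Fin 2) (Fin 2) ℂ) from rfl,
    Units.isUnit_mul_units]

lemma word_norm_bound (e einv : Matrix (Fin 2) (Fin 2) ℂ)
    (h1 : e * einv = 1) (h2 : einv * e = 1) (K : ℝ) (hK : 0 ≤ K)
    (l : List (Matrix (Fin 2) (Fin 2) ℂ)) (hl : ∀ X ∈ l, ‖e * X * einv‖ ≤ K) :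
    ‖e * l.prod * einv‖ ≤ K ^ l.length := by
  induction l with
  | nil => simp [h1]
  | cons x t ih =>
    have hx := hl x (by simp)
    have ht : ∀ X ∈ t, ‖e * X * einv‖ ≤ K := fun X hX => hl X (by simp [hX])
    have hsplit : e * (x :: t).prod * einv = (e * x * einv) * (e * t.prod * einv) := by
      simp only [List.prod_cons, mul_assoc]
      rw [← mul_assoc einv e, h2, one_mul]
    rw [hsplit, List.length_cons, pow_succ']
    calc ‖(e * x * einv) * (e * t.prod * einv)‖ ≤ ‖e * x * einv‖ * ‖e * t.prod * einv‖ :=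
          norm_mul_le _ _
      _ ≤ K * K ^ t.length := by
          apply mul_le_mul hx (ih ht) (norm_nonneg _)
          exact hK

lemma map_prod_ofReal (l : List (Matrix (Fin 2) (Fin 2) ℝ)) :
    (l.prod).map Complex.ofReal = (l.map (fun M => M.map Complex.ofReal)).prod := by
  induction l with
  | nil =>
    simp [Matrix.map_one Complex.ofReal Complex.ofReal_zero Complex.ofReal_one]
  | cons x t ih =>
    simp only [List.prod_cons, List.map_cons]
    rw [← ih]
    exact Matrix.map_mul (f := Complex.ofRealHom)

lemma map_fin_two (p q r s : ℝ) :
    (!![p, q; r, s]).map Complex.ofReal = !![(p:ℂ), q; r, s] := by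
  ext i j
  fin_cases i <;> fin_cases j <;> simp

end part2


section part3


lemma map_fin_two' (p q r s : ℝ) :
    (!![p, q; r, s]).map Complex.ofReal = !![(p:ℂ), q; r, s] := by
  ext i j
  fin_cases i <;> fin_cases j <;> simp

lemma e_mul (u : ℝ) (hu : u ≠ 0) :
    !![1, 0; 0, (u:ℂ)] * !![1, 0; 0, ((u⁻¹ : ℝ):ℂ)] = 1 := by
  have : (u:ℂ) ≠ 0 := Complex.ofReal_ne_zero.mpr hu
  ext i j
  fin_cases i <;> fin_cases j <;>
    simp [Matrix.mul_apply, Fin.sum_univ_two, Matrix.one_apply] <;>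
    push_cast <;> field_simp

lemma e_mul' (u : ℝ) (hu : u ≠ 0) :
    !![1, 0; 0, ((u⁻¹ : ℝ):ℂ)] * !![1, 0; 0, (u:ℂ)] = 1 := by
  have : (u:ℂ) ≠ 0 := Complex.ofReal_ne_zero.mpr hu
  ext i j
  fin_cases i <;> fin_cases j <;>
    simp [Matrix.mul_apply, Fin.sum_univ_two, Matrix.one_apply] <;>
    push_cast <;> field_simp

lemma conjA (u l1 l2 : ℝ) (hu : u ≠ 0) :
    !![1, 0; 0, (u:ℂ)] * (!![l1, 0; 0, l2].map Complex.ofReal) * !![1, 0; 0, ((u⁻¹ : ℝ):ℂ)]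
      = !![l1, 0; 0, l2].map Complex.ofReal := by
  have : (u:ℂ) ≠ 0 := Complex.ofReal_ne_zero.mpr hu
  rw [map_fin_two']
  ext i j
  fin_cases i <;> fin_cases j <;>
    simp [Matrix.mul_apply, Fin.sum_univ_two] <;>
    push_cast <;> field_simp <;> ring

lemma conjB (u a b c d : ℝ) (hu : u ≠ 0) :
    !![1, 0; 0, (u:ℂ)] * (!![a, b; c, d].map Complex.ofReal) * !![1, 0; 0, ((u⁻¹ : ℝ):ℂ)]
      = !![(a:ℂ), ((b * u⁻¹ : ℝ):ℂ); ((c * u : ℝ):ℂ), (d:ℂ)] := by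
  have h : (u:ℂ) ≠ 0 := Complex.ofReal_ne_zero.mpr hu
  rw [map_fin_two']
  ext i j
  fin_cases i <;> fin_cases j
  · simp [Matrix.mul_apply, Fin.sum_univ_two]
  · simp [Matrix.mul_apply, Fin.sum_univ_two]
  · simp [Matrix.mul_apply, Fin.sum_univ_two]; push_cast; ring
  · simp [Matrix.mul_apply, Fin.sum_univ_two]
    push_cast
    rw [mul_comm (u:ℂ) (d:ℂ), mul_assoc, mul_inv_cancel₀ h, mul_one]

end part3

lemma srad_conj (e einv M : Matrix (Fin 2) (Fin 2) ℂ)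
    (h1 : e * einv = 1) (h2 : einv * e = 1) :
    spectralRadius ℂ (e * M * einv) = spectralRadius ℂ M := by
  unfold spectralRadius
  rw [spectrum_conj e einv M h1 h2]

lemma srad_toReal_le_norm (M : Matrix (Fin 2) (Fin 2) ℂ) :
    (spectralRadius ℂ M).toReal ≤ ‖M‖ := by
  have h := spectrum.spectralRadius_le_nnnorm (𝕜 := ℂ) M
  have h2 := ENNReal.toReal_mono ENNReal.coe_ne_top h
  simpa using h2

/-- Key letter bound for `B`: a diagonal conjugation making its norm
at most `specRad B + ε`. -/
lemma exists_good_u (a b c d : ℝ) (hbc : b * c ≥ 0) (ε : ℝ) (hε : 0 < ε) :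
    ∃ u : ℝ, u ≠ 0 ∧
      ‖!![1, 0; 0, (u:ℂ)] * (!![a, b; c, d].map Complex.ofReal) * !![1, 0; 0, ((u⁻¹ : ℝ):ℂ)]‖
        ≤ specRad !![a, b; c, d] + ε := by
  rcases eq_or_lt_of_le hbc with h0 | hpos
  · -- b * c = 0
    rcases mul_eq_zero.mp h0.symm with hb | hc
    · -- b = 0
      subst hb
      set u : ℝ := ε / (|c| + 1) with hu_def
      have hu0 : 0 < u := by positivity
      refine ⟨u, ne_of_gt hu0, ?_⟩
      rw [conjB u a 0 c d (ne_of_gt hu0)]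
      have hsplit : (!![(a:ℂ), ((0 * u⁻¹ : ℝ):ℂ); ((c * u : ℝ):ℂ), (d:ℂ)])
          = !![(a:ℂ), 0; 0, (d:ℂ)] + !![0, 0; ((c * u : ℝ):ℂ), 0] := by
        ext i j
        fin_cases i <;> fin_cases j <;> simp
      have hspec : specRad !![a, 0; c, d] = max |a| |d| := by
        unfold specRad
        apply srad_pair
        rw [map_fin_two']
        have := spectrum_offdiag_zero (M := !![(a:ℂ), 0; (c:ℂ), (d:ℂ)]) (by simp)
        simpa using this
      rw [hsplit, hspec]
      calc ‖!![(a:ℂ), 0; 0, (d:ℂ)] + !![0, 0; ((c * u : ℝ):ℂ), 0]‖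
          ≤ ‖!![(a:ℂ), 0; 0, (d:ℂ)]‖ + ‖!![(0:ℂ), 0; ((c * u : ℝ):ℂ), 0]‖ := norm_add_le _ _
        _ = max |a| |d| + |c * u| := by rw [norm_diagC, norm_E10]
        _ ≤ max |a| |d| + ε := by
            have : |c * u| = |c| * u := by
              rw [abs_mul, abs_of_pos hu0]
            rw [this, hu_def]
            have hpos1 : (0:ℝ) < |c| + 1 := by positivity
            have h1 : |c| * (ε / (|c| + 1)) ≤ ε := by
              rw [show |c| * (ε / (|c| + 1)) = ε * (|c| / (|c| + 1)) by ring]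
              nlinarith [abs_nonneg c,
                div_le_one_of_le₀ (by linarith : |c| ≤ |c| + 1) (le_of_lt hpos1)]
            linarith
    · -- c = 0
      subst hc
      set u : ℝ := (|b| + 1) / ε with hu_def
      have hu0 : 0 < u := by positivity
      refine ⟨u, ne_of_gt hu0, ?_⟩
      rw [conjB u a b 0 d (ne_of_gt hu0)]
      have hsplit : (!![(a:ℂ), ((b * u⁻¹ : ℝ):ℂ); ((0 * u : ℝ):ℂ), (d:ℂ)])
          = !![(a:ℂ), 0; 0, (d:ℂ)] + !![0, ((b * u⁻¹ : ℝ):ℂ); 0, 0] := by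
        ext i j
        fin_cases i <;> fin_cases j <;> simp
      have hspec : specRad !![a, b; 0, d] = max |a| |d| := by
        unfold specRad
        apply srad_pair
        rw [map_fin_two']
        have := spectrum_offdiag_zero (M := !![(a:ℂ), (b:ℂ); 0, (d:ℂ)]) (by simp)
        simpa using this
      rw [hsplit, hspec]
      calc ‖!![(a:ℂ), 0; 0, (d:ℂ)] + !![0, ((b * u⁻¹ : ℝ):ℂ); 0, 0]‖
          ≤ ‖!![(a:ℂ), 0; 0, (d:ℂ)]‖ + ‖!![(0:ℂ), ((b * u⁻¹ : ℝ):ℂ); 0, 0]‖ := norm_add_le _ _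
        _ = max |a| |d| + |b * u⁻¹| := by rw [norm_diagC, norm_E01]
        _ ≤ max |a| |d| + ε := by
            have hui : u⁻¹ = ε / (|b| + 1) := by
              rw [hu_def]; field_simp
            have : |b * u⁻¹| = |b| * (ε / (|b| + 1)) := by
              rw [abs_mul, hui, abs_of_pos (by positivity : (0:ℝ) < ε / (|b| + 1))]
            rw [this]
            have hpos1 : (0:ℝ) < |b| + 1 := by positivity
            have h1 : |b| * (ε / (|b| + 1)) ≤ ε := by
              rw [show |b| * (ε / (|b| + 1)) = ε * (|b| / (|b| + 1)) by ring]
              nlinarith [abs_nonneg b, div_le_one_of_le₀ (by linarith : |b| ≤ |b| + 1) (le_of_lt hpos1)]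
            linarith
  · -- 0 < b * c
    have hc : c ≠ 0 := by
      rintro rfl; simp at hpos
    have hbcpos : 0 < b / c := by
      have h1 : b / c = (b * c) / (c * c) := by field_simp
      rw [h1]
      exact div_pos hpos (mul_self_pos.mpr hc)
    set u : ℝ := Real.sqrt (b / c) with hu_def
    have hu0 : 0 < u := Real.sqrt_pos.mpr hbcpos
    refine ⟨u, ne_of_gt hu0, ?_⟩
    have hu2 : u ^ 2 = b / c := Real.sq_sqrt hbcpos.le
    have hkey : b * u⁻¹ = c * u := by
      have hb : b = c * u ^ 2 := by rw [hu2]; field_simp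
      rw [hb]; field_simp
    rw [conjB u a b c d (ne_of_gt hu0), hkey]
    have hsa : _root_.IsSelfAdjoint (!![(a:ℂ), ((c * u : ℝ):ℂ); ((c * u : ℝ):ℂ), (d:ℂ)]) :=
      selfadj_real_sym a (c * u) d
    rw [norm_eq_srad_of_selfAdjoint hsa]
    have hconj : (!![(a:ℂ), ((c * u : ℝ):ℂ); ((c * u : ℝ):ℂ), (d:ℂ)])
        = !![1, 0; 0, (u:ℂ)] * (!![a, b; c, d].map Complex.ofReal) * !![1, 0; 0, ((u⁻¹ : ℝ):ℂ)] := by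
      rw [conjB u a b c d (ne_of_gt hu0), hkey]
    rw [hconj, srad_conj _ _ _ (e_mul u (ne_of_gt hu0)) (e_mul' u (ne_of_gt hu0))]
    unfold specRad
    linarith

lemma specRad_word_le (l1 l2 a b c d ε : ℝ) (hbc : b * c ≥ 0) (hε : 0 < ε)
    (l : List (Matrix (Fin 2) (Fin 2) ℝ))
    (hl : ∀ X ∈ l, X = !![l1, 0; 0, l2] ∨ X = !![a, b; c, d]) :
    specRad l.prod
      ≤ (max (specRad !![l1, 0; 0, l2]) (specRad !![a, b; c, d]) + ε) ^ l.length := by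
  obtain ⟨u, hu, hBb⟩ := exists_good_u a b c d hbc ε hε
  set e : Matrix (Fin 2) (Fin 2) ℂ := !![1, 0; 0, (u:ℂ)] with he
  set einv : Matrix (Fin 2) (Fin 2) ℂ := !![1, 0; 0, ((u⁻¹ : ℝ):ℂ)] with heinv
  have h1 : e * einv = 1 := e_mul u hu
  have h2 : einv * e = 1 := e_mul' u hu
  set m := max (specRad !![l1, 0; 0, l2]) (specRad !![a, b; c, d]) with hm
  have hm0 : 0 ≤ m := le_trans (specRad_nonneg _) (le_max_left _ _)
  have hK : 0 ≤ m + ε := by linarith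
  have hAb : ‖e * (!![l1, 0; 0, l2].map Complex.ofReal) * einv‖ ≤ m + ε := by
    rw [he, heinv, conjA u l1 l2 hu]
    have hsa : _root_.IsSelfAdjoint (!![l1, 0; 0, l2].map Complex.ofReal) := by
      rw [map_fin_two']
      simpa using selfadj_real_sym l1 0 l2
    rw [norm_eq_srad_of_selfAdjoint hsa]
    have : (spectralRadius ℂ (!![l1, 0; 0, l2].map Complex.ofReal)).toReal
        = specRad !![l1, 0; 0, l2] := rfl
    rw [this]
    have := le_max_left (specRad !![l1, 0; 0, l2]) (specRad !![a, b; c, d])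
    linarith
  have hBb' : ‖e * (!![a, b; c, d].map Complex.ofReal) * einv‖ ≤ m + ε := by
    have := le_max_right (specRad !![l1, 0; 0, l2]) (specRad !![a, b; c, d])
    rw [he, heinv]
    linarith
  have hletters : ∀ X ∈ l.map (fun M => M.map Complex.ofReal), ‖e * X * einv‖ ≤ m + ε := by
    intro X hX
    rcases List.mem_map.mp hX with ⟨Y, hY, rfl⟩
    rcases hl Y hY with h | h <;> rw [h]
    · exact hAb
    · exact hBb'
  have hmain := word_norm_bound e einv h1 h2 (m + ε) hK
    (l.map (fun M => M.map Complex.ofReal)) hletters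
  calc specRad l.prod = (spectralRadius ℂ ((l.prod).map Complex.ofReal)).toReal := rfl
    _ = (spectralRadius ℂ (e * (l.map (fun M => M.map Complex.ofReal)).prod * einv)).toReal := by
        rw [map_prod_ofReal, srad_conj _ _ _ h1 h2]
    _ ≤ ‖e * (l.map (fun M => M.map Complex.ofReal)).prod * einv‖ := srad_toReal_le_norm _
    _ ≤ (m + ε) ^ (l.map (fun M => M.map Complex.ofReal)).length := hmain
    _ = (m + ε) ^ l.length := by rw [List.length_map]

lemma le_pow_of_forall_eps (x m : ℝ) (n : ℕ) (h : ∀ ε > (0:ℝ), x ≤ (m + ε) ^ n) :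
    x ≤ m ^ n := by
  have hc : Continuous fun ε : ℝ => (m + ε) ^ n := by continuity
  have ht : Filter.Tendsto (fun ε : ℝ => (m + ε) ^ n)
      (nhdsWithin 0 (Set.Ioi 0)) (nhds (m ^ n)) := by
    have := hc.tendsto 0
    simp only [add_zero] at this
    exact this.mono_left nhdsWithin_le_nhds
  exact ge_of_tendsto ht (by
    filter_upwards [self_mem_nhdsWithin] with ε hε
    exact h ε hε)

/-- for a diagonal `A` and a matrix `B` with `b * c ≥ 0`, the
generalized spectral radius of `{A, B}` is `max {ρ(A), ρ(B)}`; in particular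
`{A, B}` has the spectral finiteness property. -/
theorem gsr_diagonal_and_nonneg_offdiagonal
    (l1 l2 a b c d : ℝ)
    (A B : Matrix (Fin 2) (Fin 2) ℝ)
    (hA : A = !![l1, 0; 0, l2]) (hB : B = !![a, b; c, d])
    (hbc : b * c ≥ 0) :
    gsr {A, B} = max (specRad A) (specRad B) ∧ hasSpectralFiniteness {A, B} := by
  subst hA hB
  set A := !![l1, 0; 0, l2] with hA
  set B := !![a, b; c, d] with hB
  set m := max (specRad A) (specRad B) with hm
  set S := {x : ℝ | ∃ n : ℕ, 1 ≤ n ∧ ∃ M ∈ prodsOfLen {A, B} n,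
    x = specRad M ^ ((1 : ℝ) / n)} with hS
  have hgsr : gsr {A, B} = sSup S := rfl
  have hm0 : 0 ≤ m := le_trans (specRad_nonneg _) (le_max_left _ _)
  have hub : ∀ x ∈ S, x ≤ m := by
    rintro x ⟨n, hn, M, ⟨l, hlen, hmem, rfl⟩, rfl⟩
    have hword : specRad l.prod ≤ m ^ n := by
      rw [← hlen]
      apply le_pow_of_forall_eps
      intro ε hε
      apply specRad_word_le l1 l2 a b c d ε hbc hε
      intro X hX
      rcases hmem X hX with h | h
      · exact Or.inl h
      · exact Or.inr h
    have hn' : (n : ℝ) ≠ 0 := by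
      exact_mod_cast Nat.one_le_iff_ne_zero.mp hn
    calc specRad l.prod ^ ((1:ℝ)/n) ≤ (m ^ n) ^ ((1:ℝ)/n) :=
          Real.rpow_le_rpow (specRad_nonneg _) hword (by positivity)
      _ = m := by
          rw [← Real.rpow_natCast m n, ← Real.rpow_mul hm0]
          rw [show (n:ℝ) * ((1:ℝ)/n) = 1 by field_simp]
          exact Real.rpow_one m
  have hbdd : BddAbove S := ⟨m, hub⟩
  have hA_mem : specRad A ∈ S := by
    refine ⟨1, le_refl 1, A, ⟨[A], rfl, by simp, by simp⟩, ?_⟩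
    norm_num
  have hB_mem : specRad B ∈ S := by
    refine ⟨1, le_refl 1, B, ⟨[B], rfl, by simp, by simp⟩, ?_⟩
    norm_num
  have heq : gsr {A, B} = m := by
    rw [hgsr]
    exact le_antisymm (csSup_le ⟨_, hA_mem⟩ hub)
      (max_le (le_csSup hbdd hA_mem) (le_csSup hbdd hB_mem))
  refine ⟨heq, ?_⟩
  rcases le_total (specRad B) (specRad A) with h | h
  · exact ⟨1, le_refl 1, A, ⟨[A], rfl, by simp, by simp⟩, by
      rw [heq, hm, max_eq_left h]; norm_num⟩
  · exact ⟨1, le_refl 1, B, ⟨[B], rfl, by simp, by simp⟩, by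
      rw [heq, hm, max_eq_right h]; norm_num⟩
end

section
/- Let A = [[λ₁, 0], [0, λ₂]] and B = [[0, b], [c, 0]] be real 2×2 matrices with max{|λ₁|, |λ₂|} < 1 and √(|b·c|) < 1. Then for every sequence {(m_k, n_k)}_{k≥1} of pairs of positive integers, the operator norms ‖A^{m₁}·B^{n₁}·A^{m₂}·B^{n₂}⋯A^{m_k}·B^{n_k}‖₂ tend to 0 as k → +∞, where ‖·‖₂ is the matrix norm induced by the standard Euclidean norm on ℝ². -/
open Matrix Filter

open scoped Matrix.Norms.L2Operator

private lemma hv2 (v : EuclideanSpace ℝ (Fin 2)) : ‖v‖ = Real.sqrt (v 0 ^ 2 + v 1 ^ 2) := by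
  rw [EuclideanSpace.norm_eq]
  simp [Fin.sum_univ_two, Real.norm_eq_abs, sq_abs]

private lemma l2norm_le_bound (M : Matrix (Fin 2) (Fin 2) ℝ) (C : ℝ) (hC : 0 ≤ C)
    (h : ∀ x : EuclideanSpace ℝ (Fin 2),
      Real.sqrt ((M 0 0 * x 0 + M 0 1 * x 1) ^ 2 + (M 1 0 * x 0 + M 1 1 * x 1) ^ 2) ≤ C * ‖x‖) :
    ‖M‖ ≤ C := by
  rw [Matrix.l2_opNorm_def]
  refine ContinuousLinearMap.opNorm_le_bound _ hC fun x => ?_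
  rw [hv2]
  have h0 : ((Matrix.toEuclideanLin.trans LinearMap.toContinuousLinearMap) M) x 0
      = M 0 0 * x 0 + M 0 1 * x 1 := by
    show (M *ᵥ _) 0 = _
    simp [Matrix.mulVec, dotProduct, Fin.sum_univ_two]
  have h1 : ((Matrix.toEuclideanLin.trans LinearMap.toContinuousLinearMap) M) x 1
      = M 1 0 * x 0 + M 1 1 * x 1 := by
    show (M *ᵥ _) 1 = _
    simp [Matrix.mulVec, dotProduct, Fin.sum_univ_two]
  rw [h0, h1]
  exact h x

private lemma sqrt_ineq (p q C x0 x1 : ℝ) (hp : |p| ≤ C) (hq : |q| ≤ C) (hC : 0 ≤ C) :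
    Real.sqrt ((p * x0) ^ 2 + (q * x1) ^ 2) ≤ C * Real.sqrt (x0 ^ 2 + x1 ^ 2) := by
  have h1 : C * Real.sqrt (x0 ^ 2 + x1 ^ 2) = Real.sqrt (C ^ 2 * (x0 ^ 2 + x1 ^ 2)) := by
    rw [Real.sqrt_mul (sq_nonneg C), Real.sqrt_sq hC]
  rw [h1]
  apply Real.sqrt_le_sqrt
  have hp2 : p ^ 2 ≤ C ^ 2 := by nlinarith [abs_nonneg p, sq_abs p]
  have hq2 : q ^ 2 ≤ C ^ 2 := by nlinarith [abs_nonneg q, sq_abs q]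
  nlinarith [sq_nonneg x0, sq_nonneg x1]

private lemma l2norm_diag_le (a d C : ℝ) (ha : |a| ≤ C) (hd : |d| ≤ C) :
    ‖!![a, 0; 0, d]‖ ≤ C := by
  have hC : 0 ≤ C := le_trans (abs_nonneg a) ha
  refine l2norm_le_bound _ C hC fun x => ?_
  rw [hv2 x]
  simpa using sqrt_ineq a d C (x 0) (x 1) ha hd hC

private lemma l2norm_antidiag_le (u v C : ℝ) (hu : |u| ≤ C) (hv : |v| ≤ C) :
    ‖!![0, u; v, 0]‖ ≤ C := by
  have hC : 0 ≤ C := le_trans (abs_nonneg u) hu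
  refine l2norm_le_bound _ C hC fun x => ?_
  rw [hv2 x]
  have := sqrt_ineq u v C (x 1) (x 0) hu hv hC
  simpa [add_comm ((x 1)^2)] using this

private lemma norm_one_mat : ‖(1 : Matrix (Fin 2) (Fin 2) ℝ)‖ = 1 := by
  rw [Matrix.cstar_norm_def, _root_.map_one]
  exact norm_one


/-- if `A = diag(λ₁, λ₂)` with `max {|λ₁|, |λ₂|} < 1` and
`B = !![0, b; c, 0]` with `√|b*c| < 1`, then for every sequence `(m k, n k)`
of pairs of positive integers the products
`A^(m 0) * B^(n 0) * ⋯ * A^(m (k-1)) * B^(n (k-1))` tend to `0` in the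
operator norm induced by the Euclidean norm on `ℝ²` as `k → ∞`. -/
theorem prod_tendsto_zero_of_spectral_radii_lt_one
    (l1 l2 b c : ℝ)
    (A B : Matrix (Fin 2) (Fin 2) ℝ)
    (hA : A = !![l1, 0; 0, l2]) (hB : B = !![0, b; c, 0])
    (hAlt : max |l1| |l2| < 1) (hBlt : Real.sqrt |b * c| < 1)
    (m n : ℕ → ℕ) (hm : ∀ k, 1 ≤ m k) (hn : ∀ k, 1 ≤ n k) :
    Tendsto
      (fun k : ℕ => ‖((List.range k).map (fun i => A ^ m i * B ^ n i)).prod‖)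
      atTop (nhds 0) := by

  have hApow : ∀ j : ℕ, A ^ j = !![l1 ^ j, 0; 0, l2 ^ j] := by
    intro j
    induction j with
    | zero => simp [Matrix.one_fin_two]
    | succ j ih =>
      rw [pow_succ, ih, hA]
      ext i k
      fin_cases i <;> fin_cases k <;> simp [Matrix.mul_fin_two, pow_succ]
  by_cases hbc : b * c = 0
  · -- degenerate case: any product of two factors vanishes
    have hBAB : ∀ j : ℕ, B * A ^ j * B = 0 := by
      intro j
      rw [hApow, hB]
      ext i k
      fin_cases i <;> fin_cases k <;>
        simp [Matrix.mul_fin_two] <;> rcases mul_eq_zero.mp hbc with h | h <;> tauto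
    have hzero : ∀ i j : ℕ,
        (A ^ m i * B ^ n i) * (A ^ m j * B ^ n j) = 0 := by
      intro i j
      obtain ⟨p, hp⟩ : ∃ p, n i = p + 1 := ⟨n i - 1, by have := hn i; omega⟩
      obtain ⟨q, hq⟩ : ∃ q, n j = q + 1 := ⟨n j - 1, by have := hn j; omega⟩
      have : A ^ m i * B ^ n i * (A ^ m j * B ^ n j)
          = A ^ m i * B ^ p * ((B * A ^ m j * B) * B ^ q) := by
        rw [hp, hq, pow_succ, pow_succ']
        noncomm_ring
      rw [this, hBAB]
      simp
    have hprod : ∀ k, 2 ≤ k →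
        ((List.range k).map (fun i => A ^ m i * B ^ n i)).prod = 0 := by
      intro k hk
      induction k with
      | zero => omega
      | succ k ih =>
        rcases Nat.lt_or_ge k 2 with hk2 | hk2
        · interval_cases k
          · omega
          · show ((List.range 2).map _).prod = 0
            simp [List.range_succ, hzero 0 1]
        · rw [List.range_succ, List.map_append, List.prod_append, ih hk2]
          simp
    have : (fun k : ℕ => ‖((List.range k).map (fun i => A ^ m i * B ^ n i)).prod‖)
        =ᶠ[atTop] (fun _ => (0 : ℝ)) := by
      filter_upwards [eventually_ge_atTop 2] with k hk
      rw [hprod k hk, norm_zero]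
    exact Tendsto.congr' this.symm tendsto_const_nhds
  · -- main case
    have hb : b ≠ 0 := fun h => hbc (by rw [h]; ring)
    have hc : c ≠ 0 := fun h => hbc (by rw [h]; ring)
    set r : ℝ := max |l1| |l2| with hr
    set s : ℝ := Real.sqrt |b * c| with hs
    set ρ : ℝ := max r s with hρdef
    have hr0 : 0 ≤ r := le_trans (abs_nonneg l1) (le_max_left _ _)
    have hs0 : 0 ≤ s := Real.sqrt_nonneg _
    have hρ0 : 0 ≤ ρ := le_trans hr0 (le_max_left _ _)
    have hρ1 : ρ < 1 := max_lt hAlt hBlt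
    set e : ℝ := Real.sqrt (|c| / |b|) with he_def
    have he : 0 < e := Real.sqrt_pos.2 (div_pos (abs_pos.2 hc) (abs_pos.2 hb))
    set D : Matrix (Fin 2) (Fin 2) ℝ := !![e, 0; 0, 1] with hD
    set Dinv : Matrix (Fin 2) (Fin 2) ℝ := !![e⁻¹, 0; 0, 1] with hDinv
    have hDDinv : D * Dinv = 1 := by
      rw [hD, hDinv]
      ext i k
      fin_cases i <;> fin_cases k <;>
        simp [Matrix.mul_fin_two, mul_inv_cancel₀ he.ne', Matrix.one_fin_two]
    have hDinvD : Dinv * D = 1 := by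
      rw [hD, hDinv]
      ext i k
      fin_cases i <;> fin_cases k <;>
        simp [Matrix.mul_fin_two, inv_mul_cancel₀ he.ne', Matrix.one_fin_two]
    set B' : Matrix (Fin 2) (Fin 2) ℝ := !![0, e * b; c * e⁻¹, 0] with hB'
    have hconjB : D * B * Dinv = B' := by
      rw [hD, hDinv, hB, hB']
      ext i k
      fin_cases i <;> fin_cases k <;> simp [Matrix.mul_fin_two] <;> ring
    have hconjA : D * A * Dinv = A := by
      rw [hD, hDinv, hA]
      ext i k
      fin_cases i <;> fin_cases k <;> simp [Matrix.mul_fin_two] <;>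
        field_simp
    have hkey : ∀ X Y : Matrix (Fin 2) (Fin 2) ℝ,
        (D * X * Dinv) * (D * Y * Dinv) = D * (X * Y) * Dinv := by
      intro X Y
      simp only [mul_assoc]
      rw [← mul_assoc Dinv D, hDinvD, one_mul]
    have hconj1 : D * (1 : Matrix (Fin 2) (Fin 2) ℝ) * Dinv = 1 := by
      rw [mul_one, hDDinv]
    have hconjApow : ∀ j : ℕ, D * A ^ j * Dinv = A ^ j := by
      intro j
      induction j with
      | zero => simpa using hconj1
      | succ j ih => rw [pow_succ, ← hkey, ih, hconjA]
    have hconjBpow : ∀ j : ℕ, D * B ^ j * Dinv = B' ^ j := by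
      intro j
      induction j with
      | zero => simpa using hconj1
      | succ j ih => rw [pow_succ, ← hkey, ih, hconjB, pow_succ]
    have hconjF : ∀ i : ℕ,
        D * (A ^ m i * B ^ n i) * Dinv = A ^ m i * B' ^ n i := by
      intro i
      rw [← hkey, hconjApow, hconjBpow]
    -- norm bounds
    have hnormA : ∀ j : ℕ, ‖A ^ j‖ ≤ r ^ j := by
      intro j
      rw [hApow]
      refine l2norm_diag_le _ _ _ ?_ ?_
      · rw [abs_pow]; exact pow_le_pow_left₀ (abs_nonneg _) (le_max_left _ _) j
      · rw [abs_pow]; exact pow_le_pow_left₀ (abs_nonneg _) (le_max_right _ _) j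
    have hb' : |b| ≠ 0 := abs_ne_zero.mpr hb
    have hc' : |c| ≠ 0 := abs_ne_zero.mpr hc
    have he2 : e ^ 2 = |c| / |b| := Real.sq_sqrt (by positivity)
    have heb : e * |b| = s := by
      have h1 : (e * |b|) ^ 2 = s ^ 2 := by
        rw [mul_pow, he2, hs, Real.sq_sqrt (abs_nonneg _), abs_mul]
        field_simp
      rw [← Real.sqrt_sq (by positivity : (0:ℝ) ≤ e * |b|), h1, Real.sqrt_sq hs0]
    have hce : |c| * e⁻¹ = s := by
      have h1 : (|c| * e⁻¹) ^ 2 = s ^ 2 := by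
        rw [mul_pow, inv_pow, he2, hs, Real.sq_sqrt (abs_nonneg _), abs_mul, inv_div]
        field_simp
      rw [← Real.sqrt_sq (by positivity : (0:ℝ) ≤ |c| * e⁻¹), h1, Real.sqrt_sq hs0]
    have hnormB' : ‖B'‖ ≤ s := by
      rw [hB']
      refine l2norm_antidiag_le _ _ _ ?_ ?_
      · rw [abs_mul, abs_of_pos he, heb]
      · rw [abs_mul, abs_inv, abs_of_pos he, hce]
    have hnormB'pow : ∀ j : ℕ, ‖B' ^ j‖ ≤ s ^ j := by
      intro j
      induction j with
      | zero => simp [norm_one_mat]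
      | succ j ih =>
        rw [pow_succ, pow_succ]
        calc ‖B' ^ j * B'‖ ≤ ‖B' ^ j‖ * ‖B'‖ := Matrix.l2_opNorm_mul _ _
          _ ≤ s ^ j * s := mul_le_mul ih hnormB' (norm_nonneg _) (by positivity)
    have hfac : ∀ i : ℕ, ‖A ^ m i * B' ^ n i‖ ≤ ρ ^ 2 := by
      intro i
      calc ‖A ^ m i * B' ^ n i‖ ≤ ‖A ^ m i‖ * ‖B' ^ n i‖ := Matrix.l2_opNorm_mul _ _
        _ ≤ r ^ m i * s ^ n i :=
            mul_le_mul (hnormA _) (hnormB'pow _) (norm_nonneg _) (by positivity)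
        _ ≤ ρ ^ m i * ρ ^ n i := by
            apply mul_le_mul (pow_le_pow_left₀ hr0 (le_max_left _ _) _)
              (pow_le_pow_left₀ hs0 (le_max_right _ _) _) (by positivity) (by positivity)
        _ = ρ ^ (m i + n i) := (pow_add ρ _ _).symm
        _ ≤ ρ ^ 2 := pow_le_pow_of_le_one hρ0 hρ1.le (by have := hm i; have := hn i; omega)
    have hQnorm : ∀ k : ℕ,
        ‖((List.range k).map (fun i => A ^ m i * B' ^ n i)).prod‖ ≤ (ρ ^ 2) ^ k := by
      intro k
      induction k with
      | zero => simp [norm_one_mat]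
      | succ k ih =>
        rw [List.range_succ, List.map_append, List.prod_append, pow_succ]
        simp only [List.map_cons, List.map_nil, List.prod_cons, List.prod_nil, mul_one]
        calc ‖_ * (A ^ m k * B' ^ n k)‖
            ≤ ‖((List.range k).map (fun i => A ^ m i * B' ^ n i)).prod‖
              * ‖A ^ m k * B' ^ n k‖ := Matrix.l2_opNorm_mul _ _
          _ ≤ (ρ ^ 2) ^ k * ρ ^ 2 :=
              mul_le_mul ih (hfac k) (norm_nonneg _) (by positivity)
    have hconjP : ∀ k : ℕ,
        D * ((List.range k).map (fun i => A ^ m i * B ^ n i)).prod * Dinv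
          = ((List.range k).map (fun i => A ^ m i * B' ^ n i)).prod := by
      intro k
      induction k with
      | zero => simpa using hconj1
      | succ k ih =>
        simp only [List.range_succ, List.map_append, List.prod_append, List.map_cons,
          List.map_nil, List.prod_cons, List.prod_nil, mul_one]
        rw [← hkey, ih, hconjF]
    have hPform : ∀ k : ℕ,
        ((List.range k).map (fun i => A ^ m i * B ^ n i)).prod
          = Dinv * ((List.range k).map (fun i => A ^ m i * B' ^ n i)).prod * D := by
      intro k
      have cancel : ∀ X : Matrix (Fin 2) (Fin 2) ℝ, Dinv * (D * X * Dinv) * D = X := by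
        intro X
        calc Dinv * (D * X * Dinv) * D = Dinv * D * X * (Dinv * D) := by noncomm_ring
          _ = X := by rw [hDinvD, one_mul, mul_one]
      rw [← hconjP k, cancel]
    have hbound : ∀ k : ℕ,
        ‖((List.range k).map (fun i => A ^ m i * B ^ n i)).prod‖
          ≤ ‖Dinv‖ * ‖D‖ * (ρ ^ 2) ^ k := by
      intro k
      rw [hPform k]
      calc ‖Dinv * _ * D‖
          ≤ ‖Dinv * ((List.range k).map (fun i => A ^ m i * B' ^ n i)).prod‖ * ‖D‖ :=
            Matrix.l2_opNorm_mul _ _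
        _ ≤ ‖Dinv‖ * ‖((List.range k).map (fun i => A ^ m i * B' ^ n i)).prod‖ * ‖D‖ :=
            mul_le_mul_of_nonneg_right (Matrix.l2_opNorm_mul _ _) (norm_nonneg _)
        _ ≤ ‖Dinv‖ * (ρ ^ 2) ^ k * ‖D‖ :=
            mul_le_mul_of_nonneg_right
              (mul_le_mul_of_nonneg_left (hQnorm k) (norm_nonneg _)) (norm_nonneg _)
        _ = ‖Dinv‖ * ‖D‖ * (ρ ^ 2) ^ k := by ring
    have hρ2 : ρ ^ 2 < 1 := by nlinarith
    have hlim : Tendsto (fun k : ℕ => ‖Dinv‖ * ‖D‖ * (ρ ^ 2) ^ k) atTop (nhds 0) := by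
      have := (tendsto_pow_atTop_nhds_zero_of_lt_one (by positivity) hρ2).const_mul
        (‖Dinv‖ * ‖D‖)
      simpa using this
    exact squeeze_zero (fun k => norm_nonneg _) hbound hlim
end

section
/- Let K ≥ 1 and let 𝒜 = {A₀, …, A_K} ⊂ ℝ^{2×2} where A₀ = [[a, b], [c, d]] and A_k = [[a_k, r_k·b], [r_k·c, d_k]] for 1 ≤ k ≤ K, with b·c ≥ 0. Then 𝒜 is absolutely stable (i.e. max_{M ∈ 𝒜ⁿ} ‖M‖ → 0 as n → +∞) if and only if ρ(A_k) < 1 for all 0 ≤ k ≤ K. -/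
open Matrix Filter

open scoped Matrix.Norms.L2Operator

/-- `𝒜` is absolutely stable if `max_{M ∈ 𝒜ⁿ} ‖M‖ → 0` as `n → ∞`, where the
norm is the operator norm induced by the Euclidean vector norm. -/
def AbsolutelyStable (𝒜 : Set (Matrix (Fin 2) (Fin 2) ℝ)) : Prop :=
  Tendsto (fun N : ℕ => sSup ((fun M => ‖M‖) '' prodsOfLen 𝒜 (N + 1)))
    atTop (nhds 0)

lemma mem_spec_iff {𝕜 : Type*} [Field 𝕜] (a p q d z : 𝕜) :
    z ∈ spectrum 𝕜 (!![a, p; q, d]) ↔ (z - a) * (z - d) - p * q = 0 := by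
  have h1 : algebraMap 𝕜 (Matrix (Fin 2) (Fin 2) 𝕜) z - !![a, p; q, d]
      = !![z - a, -p; -q, z - d] := by
    ext i j
    fin_cases i <;> fin_cases j <;>
      simp [Matrix.algebraMap_matrix_apply]
  rw [spectrum.mem_iff, h1, Matrix.isUnit_iff_isUnit_det, isUnit_iff_ne_zero, not_not,
    Matrix.det_fin_two_of]
  constructor <;> intro h <;> linear_combination h

lemma map_ofReal_fin_two (a p q d : ℝ) :
    (!![a, p; q, d]).map Complex.ofReal = !![(a:ℂ), p; q, d] := by
  ext i j
  fin_cases i <;> fin_cases j <;> simp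

lemma spec_eq_pair (a p q d : ℝ) (h : 0 ≤ ((a-d)/2)^2 + p*q) :
    spectrum ℂ ((!![a, p; q, d]).map Complex.ofReal)
      = {((((a+d)/2 - Real.sqrt (((a-d)/2)^2 + p*q)) : ℝ) : ℂ),
         ((((a+d)/2 + Real.sqrt (((a-d)/2)^2 + p*q)) : ℝ) : ℂ)} := by
  have hw : (Real.sqrt (((a-d)/2)^2 + p*q))^2 = ((a-d)/2)^2 + p*q := Real.sq_sqrt h
  ext z
  rw [map_ofReal_fin_two, mem_spec_iff]
  have key : (z - (a:ℂ)) * (z - (d:ℂ)) - (p:ℂ) * (q:ℂ)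
      = (z - ((((a+d)/2 - Real.sqrt (((a-d)/2)^2 + p*q)) : ℝ) : ℂ))
        * (z - ((((a+d)/2 + Real.sqrt (((a-d)/2)^2 + p*q)) : ℝ) : ℂ)) := by
    have hwC : ((Real.sqrt (((a-d)/2)^2 + p*q) : ℝ) : ℂ)^2
        = (((a:ℂ)-d)/2)^2 + (p:ℂ)*(q:ℂ) := by
      rw [← Complex.ofReal_pow, hw]; push_cast; ring
    push_cast
    linear_combination hwC
  rw [key, mul_eq_zero, sub_eq_zero, sub_eq_zero]
  simp [Set.mem_insert_iff]

lemma abs_max_eq (m w : ℝ) (hw : 0 ≤ w) : max |m - w| |m + w| = |m| + w := by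
  rcases le_or_gt 0 m with hm | hm
  · rw [abs_of_nonneg hm, abs_of_nonneg (show (0:ℝ) ≤ m + w by linarith),
      max_eq_right (abs_le.mpr ⟨by linarith, by linarith⟩)]
  · rw [abs_of_neg hm, abs_of_nonpos (show m - w ≤ 0 by linarith),
      max_eq_left (abs_le.mpr ⟨by linarith, by linarith⟩)]
    ring

lemma specRad_eq (a p q d : ℝ) (h : 0 ≤ ((a-d)/2)^2 + p*q) :
    specRad !![a, p; q, d] = |(a+d)/2| + Real.sqrt (((a-d)/2)^2 + p*q) := by
  have hs := spec_eq_pair a p q d h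
  rw [specRad, spectralRadius, hs, iSup_insert, iSup_singleton,
    ENNReal.toReal_sup ENNReal.coe_ne_top ENNReal.coe_ne_top,
    ENNReal.coe_toReal, ENNReal.coe_toReal, coe_nnnorm, coe_nnnorm,
    Complex.norm_real, Complex.norm_real, Real.norm_eq_abs, Real.norm_eq_abs]
  exact abs_max_eq _ _ (Real.sqrt_nonneg _)

lemma l2norm_le (M : Matrix (Fin 2) (Fin 2) ℝ) {B : ℝ} (hB : 0 ≤ B)
    (h : ∀ x : Fin 2 → ℝ,
      ((M *ᵥ x) 0)^2 + ((M *ᵥ x) 1)^2 ≤ B^2 * ((x 0)^2 + (x 1)^2)) :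
    ‖M‖ ≤ B := by
  rw [Matrix.l2_opNorm_def]
  apply ContinuousLinearMap.opNorm_le_bound _ hB
  intro x
  rw [LinearEquiv.trans_apply, LinearMap.coe_toContinuousLinearMap',
    Matrix.toEuclideanLin_apply]
  set y : Fin 2 → ℝ := (WithLp.equiv 2 (Fin 2 → ℝ)) x with hy
  have hnx : ‖x‖ = Real.sqrt ((y 0)^2 + (y 1)^2) := by
    rw [EuclideanSpace.norm_eq, Fin.sum_univ_two]
    simp [Real.norm_eq_abs, sq_abs]
    rfl
  have hnMx : ‖(WithLp.equiv 2 (Fin 2 → ℝ)).symm (M *ᵥ y)‖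
      = Real.sqrt (((M *ᵥ y) 0)^2 + ((M *ᵥ y) 1)^2) := by
    rw [EuclideanSpace.norm_eq, Fin.sum_univ_two]
    simp [Real.norm_eq_abs, sq_abs]
  rw [show WithLp.toLp 2 (M *ᵥ x.ofLp) = (WithLp.equiv 2 (Fin 2 → ℝ)).symm (M *ᵥ y) from rfl, hnMx, hnx]
  calc Real.sqrt (((M *ᵥ y) 0)^2 + ((M *ᵥ y) 1)^2)
      ≤ Real.sqrt (B^2 * ((y 0)^2 + (y 1)^2)) := Real.sqrt_le_sqrt (h y)
    _ = B * Real.sqrt ((y 0)^2 + (y 1)^2) := by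
        rw [Real.sqrt_mul (sq_nonneg B), Real.sqrt_sq hB]

lemma mulVec_two (M : Matrix (Fin 2) (Fin 2) ℝ) (x : Fin 2 → ℝ) :
    (M *ᵥ x) 0 = M 0 0 * x 0 + M 0 1 * x 1 ∧
    (M *ᵥ x) 1 = M 1 0 * x 0 + M 1 1 * x 1 := by
  constructor <;> simp [Matrix.mulVec, dotProduct, Fin.sum_univ_two]

lemma norm_le_three (a p q d s : ℝ) :
    ‖!![a, p; q, d]‖ ≤ |(a+d)/2| + Real.sqrt (((a-d)/2)^2 + s^2) + max |p - s| |q - s| := by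
  have hd : !![a,p;q,d] = ((a+d)/2) • (1 : Matrix (Fin 2) (Fin 2) ℝ)
      + !![(a-d)/2, s; s, -((a-d)/2)] + !![0, p - s; q - s, 0] := by
    ext i j; fin_cases i <;> fin_cases j <;>
      simp [Matrix.one_apply] <;> ring
  have h1 : ‖((a+d)/2) • (1 : Matrix (Fin 2) (Fin 2) ℝ)‖ = |(a+d)/2| := by
    rw [norm_smul, norm_one, mul_one, Real.norm_eq_abs]
  have h2 : ‖!![(a-d)/2, s; s, -((a-d)/2)]‖ ≤ Real.sqrt (((a-d)/2)^2 + s^2) := by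
    apply l2norm_le _ (Real.sqrt_nonneg _)
    intro x
    obtain ⟨e0, e1⟩ := mulVec_two !![(a-d)/2, s; s, -((a-d)/2)] x
    rw [e0, e1, Real.sq_sqrt (by positivity)]
    simp only [Matrix.of_apply, Matrix.cons_val', Matrix.cons_val_zero, Matrix.cons_val_one, Matrix.head_cons,
      Matrix.empty_val', Matrix.cons_val_fin_one, Matrix.head_fin_const]
    ring_nf
    nlinarith [sq_nonneg (x 0), sq_nonneg (x 1)]
  have h3 : ‖!![(0:ℝ), p - s; q - s, 0]‖ ≤ max |p - s| |q - s| := by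
    apply l2norm_le _ (le_max_iff.mpr (Or.inl (abs_nonneg _)))
    intro x
    obtain ⟨e0, e1⟩ := mulVec_two !![(0:ℝ), p - s; q - s, 0] x
    rw [e0, e1]
    simp only [Matrix.of_apply, Matrix.cons_val', Matrix.cons_val_zero, Matrix.cons_val_one, Matrix.head_cons,
      Matrix.empty_val', Matrix.cons_val_fin_one, Matrix.head_fin_const]
    have hp : (p - s)^2 ≤ (max |p - s| |q - s|)^2 := by
      rw [← sq_abs]; exact pow_le_pow_left₀ (abs_nonneg _) (le_max_left _ _) 2
    have hq : (q - s)^2 ≤ (max |p - s| |q - s|)^2 := by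
      rw [← sq_abs]; exact pow_le_pow_left₀ (abs_nonneg _) (le_max_right _ _) 2
    nlinarith [sq_nonneg (x 0), sq_nonneg (x 1)]
  calc ‖!![a,p;q,d]‖ ≤ ‖((a+d)/2) • (1 : Matrix (Fin 2) (Fin 2) ℝ)
        + !![(a-d)/2, s; s, -((a-d)/2)]‖ + ‖!![(0:ℝ), p - s; q - s, 0]‖ := by
        rw [hd]; exact norm_add_le _ _
    _ ≤ ‖((a+d)/2) • (1 : Matrix (Fin 2) (Fin 2) ℝ)‖ + ‖!![(a-d)/2, s; s, -((a-d)/2)]‖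
        + ‖!![(0:ℝ), p - s; q - s, 0]‖ := by
        gcongr; exact norm_add_le _ _
    _ ≤ _ := by rw [h1]; gcongr
lemma prodsOfLen_zero (𝒜 : Set (Matrix (Fin 2) (Fin 2) ℝ)) : prodsOfLen 𝒜 0 = {1} := by
  ext M
  constructor
  · rintro ⟨l, hl, -, rfl⟩
    simp [List.length_eq_zero_iff.mp hl]
  · rintro rfl
    exact ⟨[], rfl, by simp, by simp⟩

lemma prodsOfLen_succ (𝒜 : Set (Matrix (Fin 2) (Fin 2) ℝ)) (n : ℕ) :
    prodsOfLen 𝒜 (n+1) = Set.image2 (· * ·) 𝒜 (prodsOfLen 𝒜 n) := by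
  ext M
  constructor
  · rintro ⟨l, hl, hmem, rfl⟩
    match l with
    | [] => simp at hl
    | x :: l' =>
      exact ⟨x, hmem x (List.mem_cons_self), l'.prod,
        ⟨l', by simpa using hl, fun X hX => hmem X (List.mem_cons_of_mem _ hX), rfl⟩,
        (List.prod_cons).symm⟩
  · rintro ⟨x, hx, M, ⟨l, hl, hmem, rfl⟩, rfl⟩
    refine ⟨x :: l, by simp [hl], ?_, (List.prod_cons).symm⟩
    intro X hX
    rcases List.mem_cons.mp hX with rfl | hX
    · exact hx
    · exact hmem X hX

lemma prodsOfLen_finite (𝒜 : Set (Matrix (Fin 2) (Fin 2) ℝ)) (h : 𝒜.Finite) (n : ℕ) :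
    (prodsOfLen 𝒜 n).Finite := by
  induction n with
  | zero => rw [prodsOfLen_zero]; exact Set.finite_singleton 1
  | succ n ih => rw [prodsOfLen_succ]; exact Set.Finite.image2 _ h ih

lemma pow_mem_prodsOfLen {𝒜 : Set (Matrix (Fin 2) (Fin 2) ℝ)}
    {X : Matrix (Fin 2) (Fin 2) ℝ} (hX : X ∈ 𝒜) (n : ℕ) : X ^ n ∈ prodsOfLen 𝒜 n :=
  ⟨List.replicate n X, List.length_replicate,
    fun Y hY => (List.eq_of_mem_replicate hY) ▸ hX, (List.prod_replicate n X).symm⟩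

section Conj
variable {t : ℝ} (ht : t ≠ 0)

lemma D_mul_Dinv (ht : t ≠ 0) : !![t, 0; 0, 1] * !![t⁻¹, 0; 0, (1:ℝ)] = 1 := by
  rw [Matrix.mul_fin_two]
  ext i j
  fin_cases i <;> fin_cases j <;>
    simp [Matrix.one_apply, ht]

lemma Dinv_mul_D (ht : t ≠ 0) : !![t⁻¹, 0; 0, (1:ℝ)] * !![t, 0; 0, 1] = 1 := by
  rw [Matrix.mul_fin_two]
  ext i j
  fin_cases i <;> fin_cases j <;>
    simp [Matrix.one_apply, ht]

lemma conj_entries (ht : t ≠ 0) (a p q d : ℝ) :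
    !![t, 0; 0, 1] * !![a, p; q, d] * !![t⁻¹, 0; 0, (1:ℝ)]
      = !![a, p * t; q * t⁻¹, d] := by
  rw [Matrix.mul_fin_two, Matrix.mul_fin_two]
  ext i j
  fin_cases i <;> fin_cases j <;> simp <;> field_simp <;> ring

lemma conj_prod_le {𝒜 : Set (Matrix (Fin 2) (Fin 2) ℝ)} (ht : t ≠ 0) {Q : ℝ}
    (hQ : ∀ X ∈ 𝒜, ‖!![t, 0; 0, 1] * X * !![t⁻¹, 0; 0, (1:ℝ)]‖ ≤ Q)
    (hQ0 : 0 ≤ Q) :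
    ∀ l : List (Matrix (Fin 2) (Fin 2) ℝ), (∀ X ∈ l, X ∈ 𝒜) →
      ‖!![t, 0; 0, 1] * l.prod * !![t⁻¹, 0; 0, (1:ℝ)]‖ ≤ Q ^ l.length := by
  intro l
  induction l with
  | nil =>
    intro _
    simp only [List.prod_nil, List.length_nil, pow_zero, mul_one, D_mul_Dinv ht]
    exact le_of_eq norm_one
  | cons x l ih =>
    intro hmem
    have hsplit : !![t, 0; 0, 1] * (x :: l).prod * !![t⁻¹, 0; 0, (1:ℝ)]
        = (!![t, 0; 0, 1] * x * !![t⁻¹, 0; 0, (1:ℝ)])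
          * (!![t, 0; 0, 1] * l.prod * !![t⁻¹, 0; 0, (1:ℝ)]) := by
      rw [List.prod_cons]
      calc !![t, 0; 0, 1] * (x * l.prod) * !![t⁻¹, 0; 0, (1:ℝ)]
          = !![t, 0; 0, 1] * x * (!![t⁻¹, 0; 0, (1:ℝ)] * !![t, 0; 0, 1])
            * l.prod * !![t⁻¹, 0; 0, (1:ℝ)] := by rw [Dinv_mul_D ht]; simp only [mul_one, mul_assoc]
        _ = _ := by simp only [mul_assoc]
    rw [hsplit, List.length_cons, pow_succ]
    calc ‖_ * _‖ ≤ ‖!![t, 0; 0, 1] * x * !![t⁻¹, 0; 0, (1:ℝ)]‖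
          * ‖!![t, 0; 0, 1] * l.prod * !![t⁻¹, 0; 0, (1:ℝ)]‖ := norm_mul_le _ _
      _ ≤ Q * Q ^ l.length := by
          apply mul_le_mul (hQ x (hmem x (List.mem_cons_self)))
            (ih fun X hX => hmem X (List.mem_cons_of_mem _ hX)) (norm_nonneg _) hQ0
      _ = Q ^ l.length * Q := by ring

end Conj
/-- for a family of real 2×2 matrices sharing the off-diagonal
pair `(b, c)` up to scalar factors `r k` (with `r 0 = 1`) and with `b * c ≥ 0`,
absolute stability holds if and only if every member has spectral radius
less than one. -/
theorem absolutelyStable_iff_specRad_lt_one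
    (K : ℕ) (hK : 1 ≤ K) (b c : ℝ)
    (aa dd r : Fin (K + 1) → ℝ) (hr0 : r 0 = 1)
    (A : Fin (K + 1) → Matrix (Fin 2) (Fin 2) ℝ)
    (hA : ∀ k, A k = !![aa k, r k * b; r k * c, dd k])
    (hbc : b * c ≥ 0) :
    AbsolutelyStable (Set.range A) ↔ ∀ k, specRad (A k) < 1 := by
  have hdisc : ∀ k, 0 ≤ ((aa k - dd k)/2)^2 + (r k * b)*(r k * c) := by
    intro k
    have he : (r k * b)*(r k * c) = (r k)^2 * (b*c) := by ring
    rw [he]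
    exact add_nonneg (sq_nonneg _) (mul_nonneg (sq_nonneg _) hbc)
  have hsr : ∀ k, specRad (A k)
      = |(aa k + dd k)/2| + Real.sqrt (((aa k - dd k)/2)^2 + (r k * b)*(r k * c)) :=
    fun k => by rw [hA k]; exact specRad_eq _ _ _ _ (hdisc k)
  constructor
  · -- forward
    intro hstab k
    rw [hsr k]
    by_contra hcon
    push_neg at hcon
    set m := (aa k + dd k)/2 with hm
    set w := Real.sqrt (((aa k - dd k)/2)^2 + (r k * b)*(r k * c)) with hwdef
    have hw2 : w^2 = ((aa k - dd k)/2)^2 + (r k * b)*(r k * c) := Real.sq_sqrt (hdisc k)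
    have hmax : max |m - w| |m + w| = |m| + w := abs_max_eq m w (Real.sqrt_nonneg _)
    have hspecm : (m - w) ∈ spectrum ℝ (A k) := by
      rw [hA k, mem_spec_iff]
      linear_combination hw2
    have hspecp : (m + w) ∈ spectrum ℝ (A k) := by
      rw [hA k, mem_spec_iff]
      linear_combination hw2
    obtain ⟨lam, hlam1, hlamspec⟩ : ∃ lam : ℝ, 1 ≤ |lam| ∧ lam ∈ spectrum ℝ (A k) := by
      rcases le_total |m - w| |m + w| with hc | hc
      · exact ⟨m + w, by rw [← max_eq_right hc, hmax]; exact hcon, hspecp⟩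
      · exact ⟨m - w, by rw [← max_eq_left hc, hmax]; exact hcon, hspecm⟩
    have hfin := prodsOfLen_finite (Set.range A) (Set.finite_range A)
    have hb : ∀ n : ℕ, (1:ℝ) ≤ sSup ((fun M => ‖M‖) '' prodsOfLen (Set.range A) (n+1)) := by
      intro n
      have h1 : lam ^ (n+1) ∈ spectrum ℝ ((A k)^(n+1)) :=
        spectrum.pow_image_subset (A k) (n+1) ⟨lam, hlamspec, rfl⟩
      have h2 : |lam|^(n+1) ≤ ‖(A k)^(n+1)‖ := by
        have h2' := spectrum.norm_le_norm_of_mem h1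
        rwa [Real.norm_eq_abs, abs_pow] at h2'
      have h3 : ‖(A k)^(n+1)‖
          ≤ sSup ((fun M => ‖M‖) '' prodsOfLen (Set.range A) (n+1)) :=
        le_csSup ((hfin (n+1)).image _).bddAbove
          ⟨_, pow_mem_prodsOfLen (Set.mem_range_self k) (n+1), rfl⟩
      have h4 : (1:ℝ) ≤ |lam|^(n+1) := one_le_pow₀ hlam1
      linarith
    rcases ((tendsto_order.mp hstab).2 1 one_pos).exists with ⟨n, hn⟩
    exact absurd (hb n) (not_le.mpr hn)
  · -- backward
    intro hlt
    replace hlt : ∀ k, |(aa k + dd k)/2|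
        + Real.sqrt (((aa k - dd k)/2)^2 + (r k * b)*(r k * c)) < 1 :=
      fun k => (hsr k) ▸ hlt k
    obtain ⟨t, ht0, hconj⟩ : ∃ t : ℝ, 0 < t ∧
        ∀ k, ‖!![t, 0; 0, 1] * A k * !![t⁻¹, 0; 0, (1:ℝ)]‖ < 1 := by
      have hne : (Finset.univ : Finset (Fin (K+1))).Nonempty := Finset.univ_nonempty
      by_cases hbc' : 0 < b * c
      · -- symmetrizable case
        have hbne : b ≠ 0 := by rintro rfl; simp at hbc'
        have hcb : 0 < c / b := by
          have h1 : c / b = (b * c) / b^2 := by field_simp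
          rw [h1]; positivity
        set t := Real.sqrt (c/b) with htdef
        have ht0 : 0 < t := Real.sqrt_pos.mpr hcb
        have htne : t ≠ 0 := ne_of_gt ht0
        have ht2 : t^2 = c/b := Real.sq_sqrt hcb.le
        have hbt2 : b * t^2 = c := by rw [ht2]; field_simp
        refine ⟨t, ht0, ?_⟩
        intro k
        rw [hA k, conj_entries htne]
        have hpq : (r k * c) * t⁻¹ = (r k * b) * t := by
          calc (r k * c) * t⁻¹ = (r k * (b * t^2)) * t⁻¹ := by rw [hbt2]
            _ = (r k * b) * t := by field_simp
        rw [hpq]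
        refine lt_of_le_of_lt
          (norm_le_three (aa k) ((r k * b) * t) ((r k * b) * t) (dd k) ((r k * b) * t)) ?_
        have hp2 : ((r k * b) * t)^2 = (r k * b) * (r k * c) := by
          calc ((r k * b) * t)^2 = (r k)^2 * b * (b * t^2) := by ring
            _ = (r k)^2 * b * c := by rw [hbt2]
            _ = (r k * b) * (r k * c) := by ring
        rw [hp2]
        simpa [sub_self] using hlt k
      · have hbc0 : b * c = 0 := le_antisymm (not_lt.mp hbc') hbc
        have habs : ∀ k, |(aa k + dd k)/2| + |(aa k - dd k)/2| < 1 := by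
          intro k
          have h0 : (r k * b) * (r k * c) = 0 := by
            have he : (r k * b) * (r k * c) = (r k)^2 * (b * c) := by ring
            rw [he, hbc0, mul_zero]
          have h1 := hlt k
          rwa [h0, add_zero, Real.sqrt_sq_eq_abs] at h1
        set δ := Finset.univ.inf' hne
          (fun k => 1 - (|(aa k + dd k)/2| + |(aa k - dd k)/2|)) with hδdef
        have hδ : 0 < δ := (Finset.lt_inf'_iff hne).mpr fun k _ => by linarith [habs k]
        have hδle : ∀ k, δ ≤ 1 - (|(aa k + dd k)/2| + |(aa k - dd k)/2|) :=
          fun k => Finset.inf'_le _ (Finset.mem_univ k)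
        by_cases hc : c = 0
        · -- upper triangular case
          set R := Finset.univ.sup' hne (fun k => |r k * b|) with hRdef
          have hR0 : 0 ≤ R :=
            le_trans (abs_nonneg (r 0 * b)) (Finset.le_sup' (fun k => |r k * b|) (Finset.mem_univ 0))
          have ht0 : 0 < δ / (R+1) := div_pos hδ (by linarith)
          refine ⟨δ / (R+1), ht0, ?_⟩
          intro k
          rw [hA k, conj_entries (ne_of_gt ht0), hc]
          simp only [mul_zero, zero_mul]
          refine lt_of_le_of_lt
            (norm_le_three (aa k) ((r k * b) * (δ/(R+1))) 0 (dd k) 0) ?_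
          have hs : Real.sqrt (((aa k - dd k)/2)^2 + 0^2) = |(aa k - dd k)/2| := by
            norm_num [Real.sqrt_sq_eq_abs]
          rw [hs]
          simp only [sub_zero, sub_self, abs_zero]
          rw [max_eq_left (abs_nonneg _), abs_mul, abs_of_pos ht0]
          have h1 : |r k * b| ≤ R := Finset.le_sup' (fun k => |r k * b|) (Finset.mem_univ k)
          have h4 : |r k * b| * (δ/(R+1)) ≤ R * (δ/(R+1)) :=
            mul_le_mul_of_nonneg_right h1 ht0.le
          have h3 : R * (δ / (R+1)) < δ := by
            rw [mul_div_assoc', div_lt_iff₀ (by linarith)]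
            nlinarith
          linarith [habs k, hδle k]
        · -- lower triangular case
          have hb0 : b = 0 := by
            rcases mul_eq_zero.mp hbc0 with h | h
            · exact h
            · exact absurd h hc
          set R := Finset.univ.sup' hne (fun k => |r k * c|) with hRdef
          have hR0 : 0 ≤ R :=
            le_trans (abs_nonneg (r 0 * c)) (Finset.le_sup' (fun k => |r k * c|) (Finset.mem_univ 0))
          have htpos : 0 < (R+1)/δ := div_pos (by linarith) hδ
          refine ⟨(R+1)/δ, htpos, ?_⟩
          intro k
          have hinv : (((R+1)/δ))⁻¹ = δ/(R+1) := by rw [inv_div]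
          rw [hA k, conj_entries (ne_of_gt htpos), hb0, hinv]
          simp only [mul_zero, zero_mul]
          refine lt_of_le_of_lt
            (norm_le_three (aa k) 0 ((r k * c) * (δ/(R+1))) (dd k) 0) ?_
          have hs : Real.sqrt (((aa k - dd k)/2)^2 + 0^2) = |(aa k - dd k)/2| := by
            norm_num [Real.sqrt_sq_eq_abs]
          rw [hs]
          simp only [zero_sub, sub_zero, sub_self, abs_zero, abs_neg]
          have ht0' : 0 < δ/(R+1) := div_pos hδ (by linarith)
          rw [max_eq_right (abs_nonneg _), abs_mul, abs_of_pos ht0']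
          have h1 : |r k * c| ≤ R := Finset.le_sup' (fun k => |r k * c|) (Finset.mem_univ k)
          have h4 : |r k * c| * (δ/(R+1)) ≤ R * (δ/(R+1)) :=
            mul_le_mul_of_nonneg_right h1 ht0'.le
          have h3 : R * (δ / (R+1)) < δ := by
            rw [mul_div_assoc', div_lt_iff₀ (by linarith)]
            nlinarith
          linarith [habs k, hδle k]
    have htne : t ≠ 0 := ne_of_gt ht0
    have hne : (Finset.univ : Finset (Fin (K+1))).Nonempty := Finset.univ_nonempty
    set Q := Finset.univ.sup' hne
      (fun k => ‖!![t, 0; 0, 1] * A k * !![t⁻¹, 0; 0, (1:ℝ)]‖) with hQdef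
    have hQ1 : Q < 1 := (Finset.sup'_lt_iff hne).mpr (fun k _ => hconj k)
    have hQ0 : 0 ≤ Q :=
      le_trans (norm_nonneg (!![t, 0; 0, 1] * A 0 * !![t⁻¹, 0; 0, (1:ℝ)]))
        (Finset.le_sup' (fun k => ‖!![t, 0; 0, 1] * A k * !![t⁻¹, 0; 0, (1:ℝ)]‖)
          (Finset.mem_univ 0))
    have hQmem : ∀ X ∈ Set.range A, ‖!![t, 0; 0, 1] * X * !![t⁻¹, 0; 0, (1:ℝ)]‖ ≤ Q := by
      rintro X ⟨k, rfl⟩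
      exact Finset.le_sup' (fun k => ‖!![t, 0; 0, 1] * A k * !![t⁻¹, 0; 0, (1:ℝ)]‖)
        (Finset.mem_univ k)
    have hprod := conj_prod_le htne hQmem hQ0
    set Cst := ‖!![t⁻¹, 0; 0, (1:ℝ)]‖ * ‖!![t, 0; 0, (1:ℝ)]‖ with hCdef
    have hCst : 0 ≤ Cst := mul_nonneg (norm_nonneg _) (norm_nonneg _)
    have hM : ∀ n, ∀ M ∈ prodsOfLen (Set.range A) n, ‖M‖ ≤ Cst * Q^n := by
      rintro n M ⟨l, hl, hmem, rfl⟩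
      have h1 : !![t⁻¹, 0; 0, (1:ℝ)] * (!![t, 0; 0, 1] * l.prod * !![t⁻¹, 0; 0, (1:ℝ)])
          * !![t, 0; 0, (1:ℝ)] = l.prod := by
        calc !![t⁻¹, 0; 0, (1:ℝ)] * (!![t, 0; 0, 1] * l.prod * !![t⁻¹, 0; 0, (1:ℝ)])
            * !![t, 0; 0, (1:ℝ)]
            = (!![t⁻¹, 0; 0, (1:ℝ)] * !![t, 0; 0, 1]) * l.prod
              * (!![t⁻¹, 0; 0, (1:ℝ)] * !![t, 0; 0, 1]) := by simp only [mul_assoc]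
          _ = l.prod := by rw [Dinv_mul_D htne, one_mul, mul_one]
      calc ‖l.prod‖
          = ‖!![t⁻¹, 0; 0, (1:ℝ)] * (!![t, 0; 0, 1] * l.prod * !![t⁻¹, 0; 0, (1:ℝ)])
            * !![t, 0; 0, (1:ℝ)]‖ := by rw [h1]
        _ ≤ ‖!![t⁻¹, 0; 0, (1:ℝ)] * (!![t, 0; 0, 1] * l.prod * !![t⁻¹, 0; 0, (1:ℝ)])‖
            * ‖!![t, 0; 0, (1:ℝ)]‖ := norm_mul_le _ _
        _ ≤ (‖!![t⁻¹, 0; 0, (1:ℝ)]‖ * ‖!![t, 0; 0, 1] * l.prod * !![t⁻¹, 0; 0, (1:ℝ)]‖)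
            * ‖!![t, 0; 0, (1:ℝ)]‖ :=
            mul_le_mul_of_nonneg_right (norm_mul_le _ _) (norm_nonneg _)
        _ ≤ (‖!![t⁻¹, 0; 0, (1:ℝ)]‖ * Q ^ l.length) * ‖!![t, 0; 0, (1:ℝ)]‖ := by
            have := hprod l hmem
            gcongr
        _ = Cst * Q ^ l.length := by rw [hCdef]; ring
        _ = Cst * Q ^ n := by rw [hl]
    apply squeeze_zero (g := fun N : ℕ => Cst * Q^(N+1))
    · intro N
      apply Real.sSup_nonneg
      rintro x ⟨M, -, rfl⟩
      exact norm_nonneg M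
    · intro N
      apply Real.sSup_le
      · rintro x ⟨M, hMmem, rfl⟩
        exact hM (N+1) M hMmem
      · exact mul_nonneg hCst (pow_nonneg hQ0 _)
    · have h := tendsto_pow_atTop_nhds_zero_of_lt_one hQ0 hQ1
      have h2 : Tendsto (fun N : ℕ => Q^(N+1)) atTop (nhds 0) :=
        h.comp (tendsto_add_atTop_nat 1)
      simpa using h2.const_mul Cst
end

section
/- Let A₀ = [[-3, 3.5], [-4, 4.5]] and A₁ = [[0.5, 0], [0, 1]] be real 2×2 matrices. Then {A₀, A₁} cannot be simultaneously symmetrized: there is no invertible real 2×2 matrix Q such that both Q·A₀·Q⁻¹ and Q·A₁·Q⁻¹ are symmetric. -/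
open Matrix

/-- the pair `A₀ = !![-3, 3.5; -4, 4.5]`, `A₁ = !![0.5, 0; 0, 1]`
cannot be simultaneously symmetrized: no invertible real 2×2 matrix `Q` makes
both `Q * A₀ * Q⁻¹` and `Q * A₁ * Q⁻¹` symmetric. -/
theorem not_simultaneously_symmetrizable
    (A0 A1 : Matrix (Fin 2) (Fin 2) ℝ)
    (hA0 : A0 = !![-3, 3.5; -4, 4.5]) (hA1 : A1 = !![0.5, 0; 0, 1]) :
    ¬ ∃ Q : Matrix (Fin 2) (Fin 2) ℝ,
        IsUnit Q ∧ (Q * A0 * Q⁻¹).IsSymm ∧ (Q * A1 * Q⁻¹).IsSymm := by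
  rintro ⟨Q, hQ, hs0, hs1⟩
  have hdet : Q.det ≠ 0 := by
    simpa [isUnit_iff_ne_zero] using (Matrix.isUnit_iff_isUnit_det Q).mp hQ
  set a := Q 0 0 with ha
  set b := Q 0 1 with hb
  set c := Q 1 0 with hc
  set d := Q 1 1 with hd
  have hQinv : Q⁻¹ = Q.det⁻¹ • !![d, -b; -c, a] := by
    rw [Matrix.inv_def, Matrix.adjugate_fin_two, Ring.inverse_eq_inv']
  have e0 : (Q * A0 * Q⁻¹) 1 0 = (Q * A0 * Q⁻¹) 0 1 := by
    have := hs0; rw [Matrix.IsSymm] at this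
    exact congrFun (congrFun this 0) 1
  have e1 : (Q * A1 * Q⁻¹) 1 0 = (Q * A1 * Q⁻¹) 0 1 := by
    have := hs1; rw [Matrix.IsSymm] at this
    exact congrFun (congrFun this 0) 1
  rw [hQinv, hA0] at e0
  rw [hQinv, hA1] at e1
  simp only [Matrix.mul_apply, Matrix.smul_apply, Fin.sum_univ_two,
    Matrix.cons_val', Matrix.cons_val_zero, Matrix.cons_val_one, Matrix.head_cons,
    Matrix.head_fin_const, Matrix.empty_val', Matrix.cons_val_fin_one,
    smul_eq_mul, Matrix.of_apply] at e0 e1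
  rw [← ha, ← hb, ← hc, ← hd] at e0 e1
  field_simp at e0 e1
  have h2 : Q.det * Q.det ≠ 0 := mul_ne_zero hdet hdet
  have k1 : a * b + c * d = 0 := by
    have k : (a * b + c * d) * (Q.det * Q.det) = 0 * (Q.det * Q.det) := by
      linear_combination (-2 * (Q.det * Q.det)) * e1
    exact mul_right_cancel₀ h2 k
  have k0 : 3.5*a^2 + 7.5*a*b + 4*b^2 + 3.5*c^2 + 7.5*c*d + 4*d^2 = 0 := by
    have k : (3.5*a^2 + 7.5*a*b + 4*b^2 + 3.5*c^2 + 7.5*c*d + 4*d^2) * (Q.det * Q.det)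
        = 0 * (Q.det * Q.det) := by linear_combination (-(Q.det * Q.det)) * e0
    exact mul_right_cancel₀ h2 k
  have hsum : 7*a^2 + 8*b^2 + 7*c^2 + 8*d^2 = 0 := by
    linear_combination 2 * k0 - 15 * k1
  have za : a = 0 := by
    have h1 : a^2 = 0 := by linarith [sq_nonneg a, sq_nonneg b, sq_nonneg c, sq_nonneg d]
    exact pow_eq_zero_iff two_ne_zero |>.mp h1
  have zb : b = 0 := by
    have h1 : b^2 = 0 := by linarith [sq_nonneg a, sq_nonneg b, sq_nonneg c, sq_nonneg d]
    exact pow_eq_zero_iff two_ne_zero |>.mp h1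
  have zc : c = 0 := by
    have h1 : c^2 = 0 := by linarith [sq_nonneg a, sq_nonneg b, sq_nonneg c, sq_nonneg d]
    exact pow_eq_zero_iff two_ne_zero |>.mp h1
  have zd : d = 0 := by
    have h1 : d^2 = 0 := by linarith [sq_nonneg a, sq_nonneg b, sq_nonneg c, sq_nonneg d]
    exact pow_eq_zero_iff two_ne_zero |>.mp h1
  apply hdet
  rw [Matrix.det_fin_two, ← ha, ← hb, ← hc, ← hd, za, zb, zc, zd]
  ring
end
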